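/- arXiv:1507.08517 — 3 statements merged into one kernel-verified Lean document; each statement's English description precedes it below -/
import Mathlib

section
/- Let R be a local Noetherian F_q-algebra with maximal ideal m, and Λ an F_q-algebra. Let F : Λ ⊗_{F_q} R → Λ ⊗_{F_q} R be the map λ ⊗ r ↦ λ ⊗ r^q. If I ⊆ Λ ⊗_{F_q} R is an ideal generated by F(I), and I ∩ Λ = 0 (intersecting with the image of Λ under λ ↦ λ ⊗ 1), then I = 0. -/
open TensorProduct

section InvAux

variable {Fq : Type} [Field Fq] [Fintype Fq]
variable {Λ : Type} [CommRing Λ] [Algebra Fq Λ]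
variable {R : Type} [CommRing R] [Algebra Fq R]
variable {ι : Type} [DecidableEq ι]

/-- Coordinates of `Λ ⊗[Fq] R` with respect to an `Fq`-basis of `Λ`. -/
noncomputable def tE (b : Module.Basis ι Fq Λ) : (Λ ⊗[Fq] R) ≃ₗ[Fq] (ι →₀ R) :=
  (TensorProduct.congr b.repr (LinearEquiv.refl Fq R)).trans
    (TensorProduct.finsuppScalarLeft Fq R ι)

@[simp] lemma tE_tmul (b : Module.Basis ι Fq Λ) (l : Λ) (r : R) (α : ι) :
    tE b (l ⊗ₜ[Fq] r) α = b.repr l α • r := by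
  simp [tE]

lemma tE_basis_tmul (b : Module.Basis ι Fq Λ) (i : ι) (r : R) :
    tE b (b i ⊗ₜ[Fq] r) = Finsupp.single i r := by
  ext α
  rw [tE_tmul, Module.Basis.repr_self]
  rw [Finsupp.single_apply, Finsupp.single_apply]
  split <;> simp

lemma tE_symm_single (b : Module.Basis ι Fq Λ) (i : ι) (r : R) :
    (tE b).symm (Finsupp.single i r) = b i ⊗ₜ[Fq] r := by
  rw [LinearEquiv.symm_apply_eq, tE_basis_tmul]

lemma tE_symm_eq (b : Module.Basis ι Fq Λ) (y : ι →₀ R) :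
    (tE b).symm y = y.sum fun i r => b i ⊗ₜ[Fq] r := by
  conv_lhs => rw [← Finsupp.sum_single y, map_finsuppSum]
  exact Finsupp.sum_congr fun i _ => tE_symm_single b i _

lemma tE_recon (b : Module.Basis ι Fq Λ) (x : Λ ⊗[Fq] R) :
    x = ((tE b) x).sum fun i r => b i ⊗ₜ[Fq] r := by
  conv_lhs => rw [← (tE b).symm_apply_apply x]
  rw [tE_symm_eq]

lemma tE_one_tmul_mul (b : Module.Basis ι Fq Λ) (u : R) (x : Λ ⊗[Fq] R) (α : ι) :
    tE b ((1 ⊗ₜ[Fq] u) * x) α = u * tE b x α := by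
  induction x using TensorProduct.induction_on with
  | zero => simp
  | tmul l r =>
      rw [Algebra.TensorProduct.tmul_mul_tmul, one_mul, tE_tmul, tE_tmul,
        Algebra.smul_def, Algebra.smul_def]
      ring
  | add y z hy hz =>
      rw [mul_add, map_add, Finsupp.add_apply, hy, hz, map_add, Finsupp.add_apply, mul_add]

lemma tE_mul_mem (b : Module.Basis ι Fq Λ) (N : Ideal R) (x : Λ ⊗[Fq] R)
    (hx : ∀ α, tE b x α ∈ N) (y : Λ ⊗[Fq] R) (α : ι) : tE b (y * x) α ∈ N := by
  induction y using TensorProduct.induction_on with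
  | zero => simpa using N.zero_mem
  | tmul l r =>
      have key : (l ⊗ₜ[Fq] r) * x
          = ((tE b) x).sum (fun i s => (l * b i) ⊗ₜ[Fq] (r * s)) := by
        conv_lhs => rw [tE_recon b x]
        rw [Finsupp.sum, Finsupp.sum, Finset.mul_sum]
        exact Finset.sum_congr rfl fun i _ => by
          rw [Algebra.TensorProduct.tmul_mul_tmul]
      rw [key, map_finsuppSum, Finsupp.sum_apply, Finsupp.sum]
      refine Submodule.sum_mem _ fun i _ => ?_
      rw [tE_tmul, Algebra.smul_def]
      exact N.mul_mem_left _ (N.mul_mem_left _ (hx i))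
  | add y z hy hz =>
      rw [add_mul, map_add, Finsupp.add_apply]
      exact N.add_mem hy hz

open Polynomial in
/-- `∏_{t ∈ Fq} (r - t) = r^q - r` in any `Fq`-algebra. -/
lemma prod_sub_algebraMap (r : R) :
    ∏ t : Fq, (r - algebraMap Fq R t) = r ^ Fintype.card Fq - r := by
  have hq : 1 < Fintype.card Fq := Fintype.one_lt_card
  have hmonic : ((X : Fq[X]) ^ Fintype.card Fq - X).Monic := by
    apply Polynomial.monic_X_pow_sub
    rw [degree_X]
    exact_mod_cast hq
  have hdeg := FiniteField.X_pow_card_sub_X_natDegree_eq Fq hq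
  have hroots := FiniteField.roots_X_pow_card_sub_X Fq
  have hcard : Multiset.card ((X : Fq[X]) ^ Fintype.card Fq - X).roots
      = ((X : Fq[X]) ^ Fintype.card Fq - X).natDegree := by
    rw [hroots, hdeg]
    simp [Finset.card_univ]
  have hfact := Polynomial.prod_multiset_X_sub_C_of_monic_of_roots_card_eq hmonic hcard
  rw [hroots] at hfact
  have hfin : ∏ t : Fq, ((X : Fq[X]) - C t) = (X : Fq[X]) ^ Fintype.card Fq - X := by
    rw [Finset.prod_eq_multiset_prod]
    exact hfact
  have := congrArg (Polynomial.aeval r) hfin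
  simpa [map_prod] using this

end InvAux

/-- Krull intersection: if `v` is in `M₀` up to arbitrarily high powers of the maximal
ideal, then `v ∈ M₀`. -/
lemma mem_of_forall_sup_smul {R : Type} [CommRing R] [IsNoetherianRing R] [IsLocalRing R]
    {σ : Type} [Fintype σ] (M₀ : Submodule R (σ → R)) (v : σ → R)
    (h : ∀ n : ℕ, v ∈ M₀ ⊔ (IsLocalRing.maximalIdeal R) ^ n • (⊤ : Submodule R (σ → R))) :
    M₀.mkQ v = 0 := by
  haveI : Module.Finite R ((σ → R) ⧸ M₀) :=
    Module.Finite.of_surjective M₀.mkQ (Submodule.Quotient.mk_surjective M₀)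
  have hmne : IsLocalRing.maximalIdeal R ≠ ⊤ :=
    Ideal.IsMaximal.ne_top (IsLocalRing.maximalIdeal.isMaximal R)
  have hq' : M₀.mkQ v ∈
      (⨅ n : ℕ, (IsLocalRing.maximalIdeal R) ^ n • (⊤ : Submodule R ((σ → R) ⧸ M₀))) := by
    rw [Submodule.mem_iInf]
    intro n
    have h2 : M₀.mkQ v ∈ Submodule.map M₀.mkQ (M₀ ⊔ (IsLocalRing.maximalIdeal R) ^ n • ⊤) :=
      Submodule.mem_map_of_mem (h n)
    have hmap : Submodule.map M₀.mkQ M₀ = ⊥ := by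
      rw [eq_bot_iff]
      rintro y ⟨v', hv', rfl⟩
      simpa [Submodule.mkQ_apply, Submodule.Quotient.mk_eq_zero] using hv'
    rw [Submodule.map_sup, hmap, bot_sup_eq, Submodule.map_smul'', Submodule.map_top,
      Submodule.range_mkQ] at h2
    exact h2
  rwa [(IsLocalRing.maximalIdeal R).iInf_pow_smul_eq_bot_of_isLocalRing hmne,
    Submodule.mem_bot] at hq'

/-- **Invariant ideal theorem, key case.** Let `R` be a local Noetherian `F_q`-algebra,
`Λ` an `F_q`-algebra, and `F` the endomorphism of `Λ ⊗[F_q] R` with `F (λ ⊗ r) = λ ⊗ r^q`.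
If an ideal `I` is generated by `F(I)` and `I ∩ Λ = 0`, then `I = 0`. -/
theorem invariant_ideal_of_cap_bot
    (Fq : Type) [Field Fq] [Fintype Fq]
    (Λ : Type) [CommRing Λ] [Algebra Fq Λ]
    (R : Type) [CommRing R] [Algebra Fq R] [IsNoetherianRing R] [IsLocalRing R]
    (F : (Λ ⊗[Fq] R) →+* (Λ ⊗[Fq] R))
    (hF : ∀ (l : Λ) (r : R), F (l ⊗ₜ[Fq] r) = l ⊗ₜ[Fq] (r ^ Fintype.card Fq))
    (I : Ideal (Λ ⊗[Fq] R))
    (hgen : I = Ideal.span (⇑F '' (I : Set (Λ ⊗[Fq] R))))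
    (hcap : ∀ l : Λ, l ⊗ₜ[Fq] (1 : R) ∈ I → l = 0) :
    I = ⊥ := by
  classical
  rcases subsingleton_or_nontrivial R with hR | hR
  · have h10 : (1 : Λ ⊗[Fq] R) = 0 := by
      have h1 : (1 : R) = 0 := Subsingleton.elim _ _
      calc (1 : Λ ⊗[Fq] R) = (1 : Λ) ⊗ₜ[Fq] (1 : R) := rfl
        _ = (1 : Λ) ⊗ₜ[Fq] (0 : R) := by rw [h1]
        _ = 0 := TensorProduct.tmul_zero _ _
    haveI : Subsingleton (Λ ⊗[Fq] R) := subsingleton_of_zero_eq_one h10.symm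
    exact Subsingleton.elim _ _
  obtain ⟨p, hp⟩ := CharP.exists Fq
  obtain ⟨k, hpprime, hcard⟩ := FiniteField.card Fq p
  haveI := Fact.mk hpprime
  haveI : CharP R p := charP_of_injective_ringHom (algebraMap Fq R).injective p
  set q := Fintype.card Fq with hqdef
  have hq1 : 1 < q := Fintype.one_lt_card
  have hq0 : q ≠ 0 := by omega
  have hadd : ∀ s t : R, (s + t) ^ q = s ^ q + t ^ q := by
    intro s t; rw [hcard]; exact add_pow_char_pow s t p ↑k
  set b := Module.Basis.ofVectorSpace Fq Λ with hb
  set E := tE (R := R) b with hE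
  -- F-stability of I
  have hFI : ∀ x ∈ I, F x ∈ I := by
    intro x hx
    have : F x ∈ Ideal.span (⇑F '' (I : Set (Λ ⊗[Fq] R))) :=
      Ideal.subset_span ⟨x, hx, rfl⟩
    rwa [← hgen] at this
  have hFnI : ∀ n, ∀ x ∈ I, F^[n] x ∈ I := by
    intro n
    induction n with
    | zero => exact fun x hx => hx
    | succ n ih =>
        intro x hx
        rw [Function.iterate_succ_apply]
        exact ih _ (hFI x hx)
  have hEF : ∀ (x : Λ ⊗[Fq] R) (α), E (F x) α = (E x α) ^ q := by
    intro x
    induction x using TensorProduct.induction_on with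
    | zero => intro α; rw [map_zero, map_zero]; simp [zero_pow hq0]
    | tmul l r =>
        intro α
        rw [hF l r, hE, tE_tmul, tE_tmul, Algebra.smul_def, Algebra.smul_def, mul_pow,
          ← map_pow, FiniteField.pow_card]
    | add y z hy hz =>
        intro α
        rw [map_add, map_add, Finsupp.add_apply, hy, hz, map_add, Finsupp.add_apply, hadd]
  have hEFn : ∀ n (x : Λ ⊗[Fq] R) (α), E (F^[n] x) α = (E x α) ^ q ^ n := by
    intro n
    induction n with
    | zero => intro x α; simp
    | succ n ih =>
        intro x α
        rw [Function.iterate_succ_apply', hEF, ih, ← pow_mul, pow_succ]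
  set m := IsLocalRing.maximalIdeal R with hm
  have hmne : m ≠ ⊤ := Ideal.IsMaximal.ne_top (IsLocalRing.maximalIdeal.isMaximal R)
  by_cases hcase : ∀ x ∈ I, ∀ α, E x α ∈ m
  · -- everything has coordinates in m; bootstrap to all powers of m and conclude I = ⊥
    have hpow : ∀ n, ∀ x ∈ I, ∀ α, E x α ∈ m ^ (n + 1) := by
      intro n
      induction n with
      | zero => simpa [pow_one] using hcase
      | succ n ih =>
          intro x hx
          rw [hgen] at hx
          induction hx using Submodule.span_induction with
          | mem x' hx' =>
              obtain ⟨y, hy, rfl⟩ := hx'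
              intro α
              rw [hEF]
              have hy' : E y α ∈ m ^ (n + 1) := ih y hy α
              have h1 : E y α ∈ m := Ideal.pow_le_self (Nat.succ_ne_zero n) hy'
              have h2 : (E y α) ^ q = (E y α) ^ (q - 1) * E y α := by
                rw [← pow_succ]; congr 1; omega
              rw [h2, pow_succ]
              exact Ideal.mul_mem_mul (Ideal.pow_mem_of_mem _ hy' _ (by omega)) h1
          | zero => intro α; simp
          | add u v hu hv hup hvp =>
              intro α
              rw [map_add, Finsupp.add_apply]
              exact Ideal.add_mem _ (hup α) (hvp α)
          | smul a u hu hup =>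
              intro α
              rw [smul_eq_mul]
              exact tE_mul_mem b _ u hup a α
    rw [eq_bot_iff]
    intro x hx
    have hzero : ∀ α, E x α = 0 := by
      intro α
      have hmem : E x α ∈ ⨅ i : ℕ, m ^ i := by
        rw [Submodule.mem_iInf]
        intro i
        cases i with
        | zero => simp
        | succ i => exact hpow i x hx α
      rwa [Ideal.iInf_pow_eq_bot_of_isLocalRing _ hmne, Ideal.mem_bot] at hmem
    have hEx0 : E x = 0 := Finsupp.ext hzero
    have : x = 0 := by
      apply E.injective; rw [hEx0, map_zero]
    simpa using this
  · -- some element has a coordinate which is a unit: derive a contradiction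
    exfalso
    push_neg at hcase
    obtain ⟨x0, hx0I, α0', hα0'⟩ := hcase
    set Pn : ℕ → Prop :=
      fun n => ∃ x, x ∈ I ∧ (∃ α, E x α ∉ m) ∧ (E x).support.card = n with hPn
    have hex : ∃ n, Pn n := ⟨_, x0, hx0I, ⟨α0', hα0'⟩, rfl⟩
    obtain ⟨z, hzI, ⟨α₀, hα₀⟩, hzcard⟩ := Nat.find_spec hex
    have hu : IsUnit (E z α₀) := by
      by_contra h
      exact hα₀ ((IsLocalRing.mem_maximalIdeal _).mpr (mem_nonunits_iff.mpr h))
    set u := hu.unit with hudef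
    set z' := ((1 : Λ) ⊗ₜ[Fq] ((u⁻¹ : Rˣ) : R)) * z with hz'def
    have hz'I : z' ∈ I := I.mul_mem_left _ hzI
    have hz'c : ∀ α, E z' α = ((u⁻¹ : Rˣ) : R) * E z α := fun α => tE_one_tmul_mul b _ z α
    have hz'α₀ : E z' α₀ = 1 := by
      rw [hz'c, ← hu.unit_spec, ← hudef, Units.inv_mul]
    have hsupp' : (E z').support = (E z).support := by
      ext α
      simp [Finsupp.mem_support_iff, hz'c, Units.mul_right_eq_zero]
    have hz'card : (E z').support.card = Nat.find hex := by rw [hsupp', hzcard]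
    have hα₀supp : α₀ ∈ (E z').support := by
      rw [Finsupp.mem_support_iff, hz'α₀]; exact one_ne_zero
    set w := z' - F z' with hwdef
    have hwI : w ∈ I := I.sub_mem hz'I (hFI z' hz'I)
    have hwc : ∀ α, E w α = E z' α - (E z' α) ^ q := by
      intro α
      rw [hwdef, map_sub, Finsupp.sub_apply, hEF]
    have hwm : ∀ α, E w α ∈ m := by
      by_contra hcon
      push_neg at hcon
      obtain ⟨β, hβ⟩ := hcon
      have hws : (E w).support ⊆ (E z').support.erase α₀ := by
        intro α hα
        rw [Finsupp.mem_support_iff] at hα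
        rw [Finset.mem_erase, Finsupp.mem_support_iff]
        constructor
        · intro heq
          exact hα (by rw [heq, hwc, hz'α₀, one_pow, sub_self])
        · intro h0
          exact hα (by rw [hwc, h0, zero_pow hq0, sub_zero])
      have hcardlt : (E w).support.card < Nat.find hex := by
        calc (E w).support.card ≤ ((E z').support.erase α₀).card := Finset.card_le_card hws
          _ < (E z').support.card := Finset.card_erase_lt_of_mem hα₀supp
          _ = Nat.find hex := hz'card
      exact Nat.find_min hex hcardlt ⟨w, hwI, ⟨β, hβ⟩, rfl⟩
    haveI hmprime : m.IsPrime := (IsLocalRing.maximalIdeal.isMaximal R).isPrime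
    have hroot : ∀ α, ∃ t : Fq, E z' α - algebraMap Fq R t ∈ m := by
      intro α
      have h1 : (E z' α) ^ q - E z' α ∈ m := by
        have h2 := hwm α
        rw [hwc] at h2
        simpa using m.neg_mem h2
      rw [hqdef] at h1
      rw [← prod_sub_algebraMap (E z' α)] at h1
      obtain ⟨t, _, ht⟩ := Ideal.IsPrime.prod_mem_iff.mp h1
      exact ⟨t, ht⟩
    choose t ht using hroot
    have htα₀ : t α₀ ≠ 0 := by
      intro h0
      have h1 := ht α₀
      rw [h0, map_zero, sub_zero, hz'α₀] at h1
      exact hmne (Ideal.eq_top_of_isUnit_mem _ h1 isUnit_one)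
    set S := (E z').support with hSdef
    have htvmem : ∀ α, (fun α => if α ∈ S then t α else 0) α ≠ 0 → α ∈ S := by
      intro α hα
      by_cases h : α ∈ S
      · exact h
      · simp [h] at hα
    set tv := Finsupp.onFinset S (fun α => if α ∈ S then t α else 0) htvmem with htvdef
    have htvS : ∀ α ∈ S, tv α = t α := by
      intro α h; simp [htvdef, Finsupp.onFinset_apply, h]
    have htvnS : ∀ α, α ∉ S → tv α = 0 := by
      intro α h; simp [htvdef, Finsupp.onFinset_apply, h]
    set c := b.repr.symm tv with hcdef
    have hEc : ∀ α, E (c ⊗ₜ[Fq] (1 : R)) α = algebraMap Fq R (tv α) := by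
      intro α
      rw [hE, tE_tmul, hcdef, LinearEquiv.apply_symm_apply, Algebra.smul_def, mul_one]
    have hkey : ∀ (n : ℕ) α, algebraMap Fq R (tv α) - E (F^[n] z') α ∈ m ^ q ^ n := by
      intro n α
      rw [hEFn]
      by_cases hα : α ∈ S
      · rw [htvS α hα]
        have hsub : (E z' α - algebraMap Fq R (t α)) ^ q ^ n
            = (E z' α) ^ q ^ n - (algebraMap Fq R (t α)) ^ q ^ n := by
          rw [hcard, ← pow_mul]
          exact sub_pow_char_pow _ _ _
        have htfix : (t α) ^ q ^ n = t α := by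
          rw [hqdef]; exact FiniteField.pow_card_pow n (t α)
        have heq : algebraMap Fq R (t α) - (E z' α) ^ q ^ n
            = -((E z' α - algebraMap Fq R (t α)) ^ q ^ n) := by
          rw [hsub, ← map_pow (algebraMap Fq R) (t α) (q ^ n), htfix]
          ring
        rw [heq]
        exact Submodule.neg_mem _ (Ideal.pow_mem_pow (ht α) _)
      · have h0 : E z' α = 0 := Finsupp.notMem_support_iff.mp hα
        rw [htvnS α hα, map_zero, h0, zero_pow (pow_ne_zero n hq0), sub_zero]
        exact Submodule.zero_mem _
    let M₀ : Submodule R ((↥S) → R) :=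
      { carrier := {v | ∃ x, x ∈ I ∧ (∀ α : ↥S, E x ↑α = v α) ∧ ∀ α, α ∉ S → E x α = 0}
        add_mem' := by
          rintro v₁ v₂ ⟨x₁, hx₁, hv₁, ho₁⟩ ⟨x₂, hx₂, hv₂, ho₂⟩
          refine ⟨x₁ + x₂, I.add_mem hx₁ hx₂, fun α => ?_, fun α hα => ?_⟩
          · rw [map_add, Finsupp.add_apply, hv₁, hv₂]; rfl
          · rw [map_add, Finsupp.add_apply, ho₁ α hα, ho₂ α hα, add_zero]
        zero_mem' := ⟨0, I.zero_mem, fun α => by simp, fun α _ => by simp⟩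
        smul_mem' := by
          rintro r v ⟨x, hx, hv, ho⟩
          refine ⟨((1 : Λ) ⊗ₜ[Fq] r) * x, I.mul_mem_left _ hx, fun α => ?_, fun α hα => ?_⟩
          · rw [show E (((1 : Λ) ⊗ₜ[Fq] r) * x) ↑α = r * E x ↑α from tE_one_tmul_mul b r x ↑α,
              hv α]
            simp
          · rw [show E (((1 : Λ) ⊗ₜ[Fq] r) * x) α = r * E x α from tE_one_tmul_mul b r x α,
              ho α hα, mul_zero] }
    set target : (↥S) → R := fun α => algebraMap Fq R (tv ↑α) with htarget
    have hMn : ∀ n : ℕ, target ∈ M₀ ⊔ m ^ n • (⊤ : Submodule R ((↥S) → R)) := by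
      intro n
      have hxn : F^[n] z' ∈ I := hFnI n z' hz'I
      set v1 : (↥S) → R := fun α => E (F^[n] z') ↑α with hv1def
      have hv1 : v1 ∈ M₀ := by
        refine ⟨F^[n] z', hxn, fun α => rfl, fun α hα => ?_⟩
        rw [hEFn, Finsupp.notMem_support_iff.mp hα, zero_pow (pow_ne_zero n hq0)]
      have hv2 : target - v1 ∈ m ^ n • (⊤ : Submodule R ((↥S) → R)) := by
        have hcoord : ∀ α : ↥S, (target - v1) α ∈ m ^ n := by
          intro α
          have h3 := hkey n ↑α
          have hle : m ^ q ^ n ≤ m ^ n :=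
            Ideal.pow_le_pow_right (le_of_lt (Nat.lt_pow_self (n := n) hq1))
          exact hle h3
        rw [show target - v1 = ∑ α : ↥S, Pi.single α ((target - v1) α) from
          (Finset.univ_sum_single _).symm]
        refine Submodule.sum_mem _ fun α _ => ?_
        rw [show ((target - v1) α) = ((target - v1) α) • (1 : R) by rw [smul_eq_mul, mul_one],
          Pi.single_smul]
        exact Submodule.smul_mem_smul (by simpa using hcoord α) Submodule.mem_top
      have hsum := Submodule.add_mem_sup hv1 hv2
      rwa [show v1 + (target - v1) = target by abel] at hsum
    have htm : target ∈ M₀ := by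
      have h0 := mem_of_forall_sup_smul M₀ target hMn
      rwa [Submodule.mkQ_apply, Submodule.Quotient.mk_eq_zero] at h0
    obtain ⟨x, hxI, hxS, hxout⟩ := htm
    have hEx : E x = E (c ⊗ₜ[Fq] (1 : R)) := by
      ext α
      rw [hEc α]
      by_cases hα : α ∈ S
      · exact hxS ⟨α, hα⟩
      · rw [hxout α hα, htvnS α hα, map_zero]
    have hxc : x = c ⊗ₜ[Fq] (1 : R) := E.injective hEx
    have hc0 : c = 0 := hcap c (by rwa [hxc] at hxI)
    have htv0 : tv = 0 := by
      have h := congrArg b.repr hc0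
      rwa [hcdef, LinearEquiv.apply_symm_apply, map_zero] at h
    have ht0 : t α₀ = 0 := by
      have h1 : tv α₀ = t α₀ := htvS α₀ hα₀supp
      rw [htv0] at h1
      exact h1.symm
    exact htα₀ ht0
end

section
/- Let R be a Noetherian local F_q-algebra with maximal ideal m, Λ an F_q-algebra, F the Frobenius endomorphism of Λ ⊗_{F_q} R (identity on Λ, r ↦ r^q on R). If I ⊆ Λ ⊗_{F_q} R is an ideal generated by F(I) with I ∩ Λ = 0, then I ⊆ Λ ⊗_{F_q} m. -/
open TensorProduct

section Helpers

variable {Fq : Type} [Field Fq] [Fintype Fq]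
variable {Λ : Type} [CommRing Λ] [Algebra Fq Λ]
variable {R : Type} [CommRing R] [Algebra Fq R]

lemma exists_tmul_rep (x : Λ ⊗[Fq] R) :
    ∃ (n : ℕ) (a : Fin n → Λ) (b : Fin n → R), x = ∑ i, a i ⊗ₜ[Fq] b i := by
  induction x using TensorProduct.induction_on with
  | zero => exact ⟨0, ![], ![], by simp⟩
  | tmul l r => exact ⟨1, ![l], ![r], by simp⟩
  | add x y hx hy =>
    obtain ⟨n, a, b, rfl⟩ := hx
    obtain ⟨m, c, d, rfl⟩ := hy
    refine ⟨n + m, Fin.append a c, Fin.append b d, ?_⟩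
    rw [Fin.sum_univ_add]
    simp [Fin.append_left, Fin.append_right]

/-- elementary tensors with second factor in an ideal -/
def Em (Fq Λ R : Type) [Field Fq] [Fintype Fq] [CommRing Λ] [Algebra Fq Λ]
    [CommRing R] [Algebra Fq R] (mI : Ideal R) : Set (Λ ⊗[Fq] R) :=
  {x | ∃ (μ : Λ) (s : R), s ∈ mI ∧ x = μ ⊗ₜ[Fq] s}

lemma tmul_mem_map {mI : Ideal R} (μ : Λ) {s : R} (hs : s ∈ mI) :
    μ ⊗ₜ[Fq] s ∈ Ideal.map
      (Algebra.TensorProduct.includeRight : R →ₐ[Fq] Λ ⊗[Fq] R).toRingHom mI := by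
  have h1 : (μ ⊗ₜ[Fq] (1:R)) *
      ((Algebra.TensorProduct.includeRight : R →ₐ[Fq] Λ ⊗[Fq] R).toRingHom s) = μ ⊗ₜ[Fq] s := by
    simp [Algebra.TensorProduct.tmul_mul_tmul]
  rw [← h1]
  exact Ideal.mul_mem_left _ _ (Ideal.mem_map_of_mem _ hs)

lemma mul_mem_spanEm {mI : Ideal R} (a x : Λ ⊗[Fq] R)
    (hx : x ∈ Submodule.span Fq (Em Fq Λ R mI)) :
    a * x ∈ Submodule.span Fq (Em Fq Λ R mI) := by
  induction hx using Submodule.span_induction with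
  | mem y hy =>
      obtain ⟨μ, s, hs, rfl⟩ := hy
      have ha : a ∈ Submodule.span Fq {u : Λ ⊗[Fq] R | ∃ p q, p ⊗ₜ[Fq] q = u} := by
        rw [span_tmul_eq_top]; trivial
      induction ha using Submodule.span_induction with
      | mem z hz =>
          obtain ⟨l, r, rfl⟩ := hz
          refine Submodule.subset_span ⟨l * μ, r * s, mI.mul_mem_left r hs, ?_⟩
          rw [Algebra.TensorProduct.tmul_mul_tmul]
      | zero => rw [zero_mul]; exact Submodule.zero_mem _
      | add z w hz hw ihz ihw => rw [add_mul]; exact Submodule.add_mem _ ihz ihw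
      | smul c z hz ihz => rw [smul_mul_assoc]; exact Submodule.smul_mem _ _ ihz
  | zero => rw [mul_zero]; exact Submodule.zero_mem _
  | add y z hy hz ihy ihz => rw [mul_add]; exact Submodule.add_mem _ ihy ihz
  | smul c y hy ihy => rw [mul_smul_comm]; exact Submodule.smul_mem _ _ ihy

/-- the span of `Em` as an ideal -/
def EmIdeal (Fq Λ R : Type) [Field Fq] [Fintype Fq] [CommRing Λ] [Algebra Fq Λ]
    [CommRing R] [Algebra Fq R] (mI : Ideal R) : Ideal (Λ ⊗[Fq] R) where
  carrier := Submodule.span Fq (Em Fq Λ R mI)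
  add_mem' := fun ha hb => Submodule.add_mem _ ha hb
  zero_mem' := Submodule.zero_mem _
  smul_mem' := fun c x hx => by
    rw [smul_eq_mul]; exact mul_mem_spanEm c x hx

lemma map_le_spanEm (mI : Ideal R) (x : Λ ⊗[Fq] R)
    (hx : x ∈ Ideal.map
      (Algebra.TensorProduct.includeRight : R →ₐ[Fq] Λ ⊗[Fq] R).toRingHom mI) :
    x ∈ Submodule.span Fq (Em Fq Λ R mI) := by
  have hle : Ideal.map
      (Algebra.TensorProduct.includeRight : R →ₐ[Fq] Λ ⊗[Fq] R).toRingHom mI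
      ≤ EmIdeal Fq Λ R mI := by
    refine Ideal.map_le_iff_le_comap.mpr ?_
    intro s hs
    refine Ideal.mem_comap.mpr ?_
    exact Submodule.subset_span ⟨1, s, hs, by simp⟩
  exact hle hx

lemma coord_mem (mI : Ideal R) {nn : ℕ} {lam : Fin nn → Λ}
    (li : LinearIndependent Fq lam) (t : Fin nn → R)
    (h : (∑ i, lam i ⊗ₜ[Fq] t i) ∈ Ideal.map
      (Algebra.TensorProduct.includeRight : R →ₐ[Fq] Λ ⊗[Fq] R).toRingHom mI)
    (i : Fin nn) : t i ∈ mI := by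
  classical
  have hrange : LinearIndepOn Fq id (Set.range lam) := li.linearIndepOn_id
  let B := Module.Basis.extend hrange
  have hsub : Set.range lam ⊆ hrange.extend (Set.subset_univ _) :=
    hrange.subset_extend _
  let idx : Fin nn → hrange.extend (Set.subset_univ _) := fun j => ⟨lam j, hsub ⟨j, rfl⟩⟩
  have hidx : ∀ j, B (idx j) = lam j := fun j => Module.Basis.extend_apply_self _ _
  have hinj : Function.Injective lam := li.injective
  let f : Λ →ₗ[Fq] Fq := B.coord (idx i)
  have hf : ∀ j, f (lam j) = if j = i then 1 else 0 := by
    intro j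
    rw [← hidx j]
    simp only [f, Module.Basis.coord_apply, Module.Basis.repr_self]
    rw [Finsupp.single_apply]
    congr 1
    simp only [eq_iff_iff]
    constructor
    · intro hji; exact hinj (by simpa [idx, Subtype.ext_iff] using hji)
    · intro hji; subst hji; rfl
  let Ψ : Λ ⊗[Fq] R →ₗ[Fq] R :=
    (TensorProduct.lid Fq R).toLinearMap ∘ₗ (LinearMap.rTensor R f)
  have hΨt : ∀ (μ : Λ) (s : R), Ψ (μ ⊗ₜ[Fq] s) = f μ • s := by
    intro μ s
    simp [Ψ, LinearMap.rTensor_tmul]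
  have hΨJ : Ψ (∑ i, lam i ⊗ₜ[Fq] t i) ∈ mI := by
    have hx' := map_le_spanEm mI _ h
    have hEm : Submodule.span Fq (Em Fq Λ R mI)
        ≤ Submodule.comap Ψ (Submodule.restrictScalars Fq mI) := by
      rw [Submodule.span_le]
      rintro y ⟨μ, s, hs, rfl⟩
      simp only [Set.mem_setOf_eq, SetLike.mem_coe, Submodule.mem_comap,
        Submodule.restrictScalars_mem, hΨt]
      rw [Algebra.smul_def]
      exact mI.mul_mem_left _ hs
    exact hEm hx'
  rw [map_sum] at hΨJ
  simp only [hΨt, hf, ite_smul, one_smul, zero_smul] at hΨJ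
  rwa [Finset.sum_ite_eq' Finset.univ i t, if_pos (Finset.mem_univ i)] at hΨJ

lemma exists_fq_const [IsLocalRing R] {t : R}
    (ht : t ^ Fintype.card Fq - t ∈ IsLocalRing.maximalIdeal R) :
    ∃ c : Fq, t - algebraMap Fq R c ∈ IsLocalRing.maximalIdeal R := by
  classical
  set q := Fintype.card Fq with hq
  have hq2 : 2 ≤ q := Fintype.one_lt_card
  let k := IsLocalRing.ResidueField R
  let res : R →+* k := IsLocalRing.residue R
  let χ : Fq →+* k := res.comp (algebraMap Fq R)
  have hinj : Function.Injective χ := χ.injective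
  have hres : ∀ r : R, res r = 0 ↔ r ∈ IsLocalRing.maximalIdeal R := fun r =>
    Ideal.Quotient.eq_zero_iff_mem
  have hβ : (res t) ^ q - res t = 0 := by
    rw [← map_pow, ← map_sub, hres]; exact ht
  let p : Polynomial k := Polynomial.X ^ q - Polynomial.X
  have hp0 : p ≠ 0 := by
    intro h0
    have hco := congrArg (fun pp => Polynomial.coeff pp q) h0
    simp only [p, Polynomial.coeff_sub, Polynomial.coeff_X_pow_self,
      Polynomial.coeff_X, Polynomial.coeff_zero] at hco
    rw [if_neg (by omega : ¬ (1:ℕ) = q)] at hco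
    norm_num at hco
  have hroot : ∀ γ : k, γ ^ q - γ = 0 → γ ∈ p.roots := by
    intro γ hγ
    rw [Polynomial.mem_roots hp0]
    simp [p, Polynomial.IsRoot, hγ]
  have hSroot : ∀ c : Fq, (χ c) ∈ p.roots := by
    intro c
    refine hroot _ ?_
    rw [← map_pow]
    have : c ^ q = c := FiniteField.pow_card c
    rw [this, sub_self]
  by_contra hno
  push_neg at hno
  have hne : ∀ c : Fq, res t ≠ χ c := by
    intro c hc
    refine hno c ?_
    rw [← hres, map_sub]
    show res t - χ c = 0
    rw [hc, sub_self]
  have hsubset : insert (res t) (Finset.univ.image χ) ⊆ p.roots.toFinset := by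
    intro γ hγ
    rcases Finset.mem_insert.mp hγ with hγ | hγ
    · subst hγ; exact Multiset.mem_toFinset.mpr (hroot _ hβ)
    · obtain ⟨c, _, rfl⟩ := Finset.mem_image.mp hγ
      exact Multiset.mem_toFinset.mpr (hSroot c)
  have hnotmem : res t ∉ Finset.univ.image χ := by
    intro hmem
    obtain ⟨c, _, hc⟩ := Finset.mem_image.mp hmem
    exact hne c hc.symm
  have hcard1 : (insert (res t) (Finset.univ.image χ)).card = q + 1 := by
    rw [Finset.card_insert_of_notMem hnotmem,
      Finset.card_image_of_injective _ hinj, Finset.card_univ]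
  have hcard2 : p.roots.toFinset.card ≤ q := by
    calc p.roots.toFinset.card ≤ Multiset.card p.roots := Multiset.toFinset_card_le _
      _ ≤ p.natDegree := Polynomial.card_roots' p
      _ ≤ q := by
          refine le_trans (Polynomial.natDegree_sub_le _ _) ?_
          simp [Polynomial.natDegree_X_pow, Polynomial.natDegree_X]
          omega
  have := Finset.card_le_card hsubset
  rw [hcard1] at this
  omega

end Helpers

set_option maxHeartbeats 1000000 in
set_option synthInstance.maxHeartbeats 100000 in
/-- Let `R` be a Noetherian local `F_q`-algebra with maximal ideal `m`, `Λ` an `F_q`-algebra,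
`F` the Frobenius endomorphism of `Λ ⊗[F_q] R` (identity on `Λ`, `r ↦ r^q` on `R`). If an
ideal `I` is generated by `F(I)` and `I ∩ Λ = 0`, then `I ⊆ Λ ⊗[F_q] m`. -/
theorem invariant_ideal_le_tensor_maximalIdeal
    (Fq : Type) [Field Fq] [Fintype Fq]
    (Λ : Type) [CommRing Λ] [Algebra Fq Λ]
    (R : Type) [CommRing R] [Algebra Fq R] [IsNoetherianRing R] [IsLocalRing R]
    (F : (Λ ⊗[Fq] R) →+* (Λ ⊗[Fq] R))
    (hF : ∀ (l : Λ) (r : R), F (l ⊗ₜ[Fq] r) = l ⊗ₜ[Fq] (r ^ Fintype.card Fq))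
    (I : Ideal (Λ ⊗[Fq] R))
    (hgen : I = Ideal.span (⇑F '' (I : Set (Λ ⊗[Fq] R))))
    (hcap : ∀ l : Λ, l ⊗ₜ[Fq] (1 : R) ∈ I → l = 0) :
    I ≤ Ideal.map (Algebra.TensorProduct.includeRight : R →ₐ[Fq] Λ ⊗[Fq] R).toRingHom
          (IsLocalRing.maximalIdeal R) := by
  classical
  set q := Fintype.card Fq with hqdef
  have hq2 : 2 ≤ q := Fintype.one_lt_card
  set mI := IsLocalRing.maximalIdeal R with hmIdef
  set J := Ideal.map (Algebra.TensorProduct.includeRight : R →ₐ[Fq] Λ ⊗[Fq] R).toRingHom mI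
    with hJdef
  have FI : ∀ x ∈ I, F x ∈ I := by
    intro x hx
    rw [hgen]
    exact Ideal.subset_span ⟨x, hx, rfl⟩
  by_contra hcon
  obtain ⟨x₀, hx₀I, hx₀J⟩ := SetLike.not_le_iff_exists.mp hcon
  have key : ∀ (nn : ℕ) (x : Λ ⊗[Fq] R), x ∈ I →
      (∃ (lam : Fin nn → Λ) (r : Fin nn → R) (N : ℕ) (μ : Fin N → Λ) (s : Fin N → R),
        (∀ i, s i ∈ mI) ∧ x = (∑ i, lam i ⊗ₜ[Fq] r i) + ∑ i, μ i ⊗ₜ[Fq] s i) → x ∈ J := by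
    intro nn
    induction nn using Nat.strong_induction_on with
    | _ nn IH =>
    match nn, IH with
    | 0, _ =>
      rintro x hxI ⟨lam, r, N, μ, s, hs, hrep⟩
      rw [hrep, hJdef]
      have h0 : (∑ i : Fin 0, lam i ⊗ₜ[Fq] r i) = 0 := by simp
      rw [h0, zero_add]
      exact Submodule.sum_mem _ fun i _ => tmul_mem_map _ (hs i)
    | (n' + 1), IH =>
      rintro x hxI ⟨lam, r, N, μ, s, hs, hrep⟩
      by_contra hxJ
      by_cases hli : LinearIndependent Fq lam
      case neg =>
        obtain ⟨g, hg0, j, hgj⟩ := Fintype.not_linearIndependent_iff.mp hli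
        set d : Fin (n'+1) → Fq := fun i => -((g j)⁻¹ * g i) with hd
        have hrel := Fin.sum_univ_succAbove (fun i => g i • lam i) j
        rw [hg0] at hrel
        have hlamj : lam j = ∑ i : Fin n', d (j.succAbove i) • lam (j.succAbove i) := by
          have h1 : g j • lam j = -∑ i : Fin n', g (j.succAbove i) • lam (j.succAbove i) :=
            eq_neg_of_add_eq_zero_left hrel.symm
          have h2 : lam j = (g j)⁻¹ • (g j • lam j) := by
            rw [smul_smul, inv_mul_cancel₀ hgj, one_smul]
          rw [h2, h1, smul_neg, Finset.smul_sum, ← Finset.sum_neg_distrib]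
          refine Finset.sum_congr rfl fun i _ => ?_
          simp only [hd, neg_smul, smul_smul]
        have hsum : (∑ i, lam i ⊗ₜ[Fq] r i)
            = ∑ i : Fin n', lam (j.succAbove i) ⊗ₜ[Fq]
                (r (j.succAbove i) + d (j.succAbove i) • r j) := by
          rw [Fin.sum_univ_succAbove (fun i => lam i ⊗ₜ[Fq] r i) j]
          have hjj : lam j ⊗ₜ[Fq] r j
              = ∑ i : Fin n', lam (j.succAbove i) ⊗ₜ[Fq] (d (j.succAbove i) • r j) := by
            rw [hlamj, sum_tmul]
            refine Finset.sum_congr rfl fun i _ => ?_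
            rw [smul_tmul]
          rw [hjj, ← Finset.sum_add_distrib]
          refine Finset.sum_congr rfl fun i _ => ?_
          rw [← tmul_add, add_comm]
        exact absurd (IH n' (Nat.lt_succ_self _) x hxI
          ⟨_, _, N, μ, s, hs, by rw [hrep, hsum]⟩) hxJ
      case pos =>
      have hexj : ∃ j, r j ∉ mI := by
        by_contra hall
        push_neg at hall
        refine hxJ ?_
        rw [hrep, hJdef]
        exact Ideal.add_mem _ (Submodule.sum_mem _ fun i _ => tmul_mem_map _ (hall i))
          (Submodule.sum_mem _ fun i _ => tmul_mem_map _ (hs i))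
      obtain ⟨j, hrj⟩ := hexj
      have hu : IsUnit (r j) := by
        by_contra hnu
        exact hrj ((IsLocalRing.mem_maximalIdeal _).mpr hnu)
      obtain ⟨u, hu⟩ := hu
      set v : R := ((u⁻¹ : Rˣ) : R) with hv
      set x' := ((1:Λ) ⊗ₜ[Fq] v) * x with hx'
      have hx'I : x' ∈ I := Ideal.mul_mem_left _ _ hxI
      set t : Fin (n'+1) → R := fun i => v * r i with ht
      set s' : Fin N → R := fun i => v * s i with hs'def
      have hs'm : ∀ i, s' i ∈ mI := fun i => mI.mul_mem_left _ (hs i)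
      have htj : t j = 1 := by
        rw [ht]
        show v * r j = 1
        rw [hv, ← hu]
        exact Units.inv_mul u
      have hrep' : x' = (∑ i, lam i ⊗ₜ[Fq] t i) + ∑ i, μ i ⊗ₜ[Fq] s' i := by
        rw [hx', hrep, mul_add, Finset.mul_sum, Finset.mul_sum]
        congr 1 <;> exact Finset.sum_congr rfl fun i _ => by
          rw [Algebra.TensorProduct.tmul_mul_tmul, one_mul]
      have hx'J : x' ∉ J := by
        intro hmem
        refine hxJ ?_
        have hxx : ((1:Λ) ⊗ₜ[Fq] (u:R)) * x' = x := by
          rw [hx', ← mul_assoc, Algebra.TensorProduct.tmul_mul_tmul, mul_one, hv,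
            Units.mul_inv, ← Algebra.TensorProduct.one_def, one_mul]
        rw [← hxx]
        exact Ideal.mul_mem_left _ _ hmem
      have hFx' : F x' = (∑ i, lam i ⊗ₜ[Fq] (t i ^ q)) + ∑ i, μ i ⊗ₜ[Fq] (s' i ^ q) := by
        rw [hrep', map_add, map_sum, map_sum]
        simp only [hF]
      have hzI : F x' - x' ∈ I := Ideal.sub_mem _ (FI _ hx'I) hx'I
      have hzrep : F x' - x'
          = (∑ i, lam i ⊗ₜ[Fq] (t i ^ q - t i)) + ∑ i, μ i ⊗ₜ[Fq] (s' i ^ q - s' i) := by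
        rw [hFx', hrep']
        simp only [TensorProduct.tmul_sub, Finset.sum_sub_distrib]
        abel
      have hzJ : F x' - x' ∈ J := by
        refine IH n' (Nat.lt_succ_self _) _ hzI
          ⟨fun i => lam (j.succAbove i),
           fun i => t (j.succAbove i) ^ q - t (j.succAbove i), N, μ,
           fun i => s' i ^ q - s' i,
           fun i => Ideal.sub_mem _ (by
             simpa using (Ideal.pow_le_pow_right (show 1 ≤ q by omega))
               (Ideal.pow_mem_pow (hs'm i) q)) (hs'm i), ?_⟩
        rw [hzrep, Fin.sum_univ_succAbove (fun i => lam i ⊗ₜ[Fq] (t i ^ q - t i)) j, htj]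
        simp
      have hw : (∑ i, lam i ⊗ₜ[Fq] (t i ^ q - t i)) ∈ J := by
        have heq : (∑ i, lam i ⊗ₜ[Fq] (t i ^ q - t i))
            = (F x' - x') - ∑ i, μ i ⊗ₜ[Fq] (s' i ^ q - s' i) := by
          rw [hzrep]; abel
        rw [heq, hJdef]
        refine Ideal.sub_mem _ (hJdef ▸ hzJ) (Submodule.sum_mem _ fun i _ => tmul_mem_map _
          (Ideal.sub_mem _ (by
            simpa using (Ideal.pow_le_pow_right (show 1 ≤ q by omega))
              (Ideal.pow_mem_pow (hs'm i) q)) (hs'm i)))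
      have hti : ∀ i, t i ^ q - t i ∈ mI := by
        intro i
        refine coord_mem mI hli (fun i => t i ^ q - t i) ?_ i
        rw [← hJdef]
        exact hw
      have hcex : ∀ i, ∃ c : Fq, t i - algebraMap Fq R c ∈ mI := by
        intro i
        refine exists_fq_const ?_
        rw [← hqdef, ← hmIdef]
        exact hti i
      choose c hc using hcex
      have hcj : c j ≠ 0 := by
        intro h0
        have h1 := hc j
        rw [htj, h0, map_zero, sub_zero] at h1
        have hne : mI ≠ ⊤ := by
          rw [hmIdef]
          exact Ideal.IsMaximal.ne_top inferInstance
        exact (Ideal.ne_top_iff_one mI).mp hne h1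
      set l : Λ := ∑ i, c i • lam i with hldef
      have hlne : l ≠ 0 := by
        intro h0
        refine hcj (Fintype.linearIndependent_iff.mp hli c ?_ j)
        rw [← hldef]
        exact h0
      have hxl : x' = l ⊗ₜ[Fq] (1:R)
          + ((∑ i, lam i ⊗ₜ[Fq] (t i - algebraMap Fq R (c i))) + ∑ i, μ i ⊗ₜ[Fq] s' i) := by
        rw [hrep']
        have h1 : l ⊗ₜ[Fq] (1:R) = ∑ i, lam i ⊗ₜ[Fq] (algebraMap Fq R (c i)) := by
          rw [hldef, sum_tmul]
          refine Finset.sum_congr rfl fun i _ => ?_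
          rw [smul_tmul, Algebra.algebraMap_eq_smul_one]
        have h2 : (∑ i, lam i ⊗ₜ[Fq] (algebraMap Fq R (c i)))
            + ∑ i, lam i ⊗ₜ[Fq] (t i - algebraMap Fq R (c i)) = ∑ i, lam i ⊗ₜ[Fq] t i := by
          rw [← Finset.sum_add_distrib]
          refine Finset.sum_congr rfl fun i _ => ?_
          rw [← tmul_add, add_sub_cancel]
        rw [h1, ← add_assoc, h2]
      -- combined families
      have hσ : ∀ i : Fin (n' + 1 + N),
          Fin.append (fun i0 => t i0 - algebraMap Fq R (c i0)) s' i ∈ mI := by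
        intro i
        refine Fin.addCases ?_ ?_ i
        · intro i'
          rw [Fin.append_left]
          exact hc i'
        · intro i'
          rw [Fin.append_right]
          exact hs'm i'
      have hx'σ : x' = l ⊗ₜ[Fq] (1:R) + ∑ i : Fin (n' + 1 + N),
          (Fin.append lam μ i) ⊗ₜ[Fq]
            (Fin.append (fun i0 => t i0 - algebraMap Fq R (c i0)) s' i) := by
        rw [hxl]
        congr 1
        conv_rhs => rw [Fin.sum_univ_add]
        congr 1
        · refine Finset.sum_congr rfl fun i _ => ?_
          rw [Fin.append_left, Fin.append_left]
        · refine Finset.sum_congr rfl fun i _ => ?_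
          rw [Fin.append_right, Fin.append_right]
      -- R-module structure on the tensor product via the right factor
      letI : Algebra R (Λ ⊗[Fq] R) := Algebra.TensorProduct.rightAlgebra
      have hsmul : ∀ (rr : R) (y : Λ ⊗[Fq] R), rr • y = ((1:Λ) ⊗ₜ[Fq] rr) * y := by
        intro rr y
        rw [Algebra.smul_def]
        rfl
      set NN := n' + 1 + N with hNN
      set gg : Fin (NN + 1) → Λ ⊗[Fq] R :=
        Fin.cons (l ⊗ₜ[Fq] (1:R)) (fun i => Fin.append lam μ i ⊗ₜ[Fq] (1:R)) with hgg
      let θ : (Fin (NN+1) → R) →ₗ[R] (Λ ⊗[Fq] R) :=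
        { toFun := fun cc => ∑ i, cc i • gg i
          map_add' := by
            intro a b
            simp only [Pi.add_apply, add_smul, Finset.sum_add_distrib]
          map_smul' := by
            intro rr a
            simp only [Pi.smul_apply, smul_eq_mul, mul_smul, RingHom.id_apply, Finset.smul_sum] }
      have hθ : ∀ cc, θ cc = ∑ i, cc i • gg i := fun _ => rfl
      have hsmultmul : ∀ (rr : R) (lm : Λ), rr • (lm ⊗ₜ[Fq] (1:R)) = lm ⊗ₜ[Fq] rr := by
        intro rr lm
        rw [hsmul, Algebra.TensorProduct.tmul_mul_tmul, one_mul, mul_one]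
      set σc : Fin (NN + 1) → R :=
        Fin.cons 1 (Fin.append (fun i0 => t i0 - algebraMap Fq R (c i0)) s') with hσc
      have hθcons : θ σc = x' := by
        rw [hθ, Fin.sum_univ_succ, hx'σ, hgg, hσc]
        congr 1
        · rw [Fin.cons_zero, Fin.cons_zero, one_smul]
        · refine Finset.sum_congr rfl fun i _ => ?_
          rw [Fin.cons_succ, Fin.cons_succ, hsmultmul]
      set e₀ : Fin (NN+1) → R := Pi.single 0 1 with he₀
      have hθe₀ : θ e₀ = l ⊗ₜ[Fq] (1:R) := by
        rw [hθ]
        rw [Finset.sum_eq_single (0 : Fin (NN+1))]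
        · rw [he₀, Pi.single_eq_same, one_smul, hgg, Fin.cons_zero]
        · intro b _ hb
          rw [he₀, Pi.single_eq_of_ne hb, zero_smul]
        · intro h
          exact absurd (Finset.mem_univ _) h
      have hgF : ∀ i, F (gg i) = gg i := by
        intro i
        refine Fin.cases ?_ ?_ i
        · rw [hgg, Fin.cons_zero, hF, one_pow]
        · intro i'
          rw [hgg, Fin.cons_succ, hF, one_pow]
      have hFθ : ∀ cc, F (θ cc) = θ (fun i => cc i ^ q) := by
        intro cc
        rw [hθ, hθ, map_sum]
        refine Finset.sum_congr rfl fun i _ => ?_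
        show F (cc i • gg i) = cc i ^ q • gg i
        rw [hsmul, map_mul, hF, hgF, ← hsmul]
      set K : Submodule R (Fin (NN+1) → R) :=
        Submodule.comap θ (Submodule.restrictScalars R (I : Submodule (Λ ⊗[Fq] R) (Λ ⊗[Fq] R)))
        with hK
      have keyb : ∀ b : ℕ, ∃ cc ww : Fin (NN+1) → R,
          θ cc ∈ I ∧ (∀ i, ww i ∈ mI ^ (b+1)) ∧ θ e₀ = θ cc + θ ww := by
        intro b
        induction b with
        | zero =>
          refine ⟨σc, e₀ - σc, ?_, ?_, ?_⟩
          · rw [hθcons]; exact hx'I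
          · intro i
            refine Fin.cases ?_ ?_ i
            · rw [Pi.sub_apply, he₀, hσc, Pi.single_eq_same, Fin.cons_zero, sub_self, pow_one]
              exact Ideal.zero_mem mI
            · intro i'
              rw [Pi.sub_apply, he₀, hσc, Pi.single_eq_of_ne (Fin.succ_ne_zero i'), Fin.cons_succ,
                zero_sub, pow_one]
              exact neg_mem (hσ i')
          · rw [map_sub, add_sub_cancel]
        | succ b ihb =>
          obtain ⟨cc, ww, hcc, hww, heq⟩ := ihb
          refine ⟨fun i => cc i ^ q, fun i => ww i ^ q, ?_, ?_, ?_⟩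
          · rw [← hFθ]
            exact FI _ hcc
          · intro i
            have h1 : ww i ^ q ∈ (mI ^ (b+1)) ^ q := Ideal.pow_mem_pow (hww i) q
            have h2 : (mI ^ (b+1)) ^ q ≤ mI ^ (b+1+1) := by
              rw [← pow_mul]
              refine Ideal.pow_le_pow_right ?_
              calc b + 1 + 1 ≤ (b + 1) * 2 := by omega
                _ ≤ (b + 1) * q := Nat.mul_le_mul_left _ hq2
            exact h2 h1
          · have h3 : θ e₀ = F (θ e₀) := by
              rw [hθe₀, hF, one_pow]
            rw [h3, heq, map_add, hFθ, hFθ]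
      haveI : Module.Finite R ((Fin (NN+1) → R) ⧸ K) :=
        Module.Finite.of_surjective K.mkQ (Submodule.mkQ_surjective K)
      have hbot : (⨅ b : ℕ, (mI ^ b) • (⊤ : Submodule R ((Fin (NN+1) → R) ⧸ K))) = ⊥ := by
        have hne : mI ≠ ⊤ := by
          rw [hmIdef]
          exact Ideal.IsMaximal.ne_top inferInstance
        exact Ideal.iInf_pow_smul_eq_bot_of_isLocalRing
          (M := (Fin (NN+1) → R) ⧸ K) (I := mI) hne
      have hmemb : ∀ b : ℕ, (K.mkQ e₀) ∈ (mI ^ b) • (⊤ : Submodule R ((Fin (NN+1) → R) ⧸ K)) := by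
        intro b
        obtain ⟨cc, ww, hcc, hww, heq⟩ := keyb b
        have h1 : e₀ - ww ∈ K := by
          rw [hK]
          simp only [Submodule.mem_comap, map_sub, Submodule.restrictScalars_mem]
          rw [heq]
          simpa using hcc
        have h2 : K.mkQ e₀ = K.mkQ ww := by
          rw [← sub_eq_zero, ← map_sub]
          exact (Submodule.Quotient.mk_eq_zero K).mpr h1
        have hwmem : ww ∈ (mI ^ b) • (⊤ : Submodule R (Fin (NN+1) → R)) := by
          have hw2 : ww = ∑ i, ww i • (Pi.single i (1:R) : Fin (NN+1) → R) := by
            have hps : ∀ i, ww i • (Pi.single i (1:R) : Fin (NN+1) → R) = Pi.single i (ww i) := by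
              intro i
              rw [← Pi.single_smul, smul_eq_mul, mul_one]
            simp_rw [hps]
            exact (Finset.univ_sum_single ww).symm
          rw [hw2]
          refine Submodule.sum_mem _ fun i _ => Submodule.smul_mem_smul ?_ trivial
          exact (Ideal.pow_le_pow_right (Nat.le_succ b)) (hww i)
        rw [h2]
        have h4 := Submodule.map_smul'' (mI ^ b) (⊤ : Submodule R (Fin (NN+1) → R)) K.mkQ
        rw [Submodule.map_top, Submodule.range_mkQ] at h4
        rw [← h4]
        exact Submodule.mem_map_of_mem hwmem
      have hz0 : K.mkQ e₀ = 0 := by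
        have : K.mkQ e₀ ∈ (⊥ : Submodule R ((Fin (NN+1) → R) ⧸ K)) := by
          rw [← hbot]
          exact Submodule.mem_iInf _ |>.mpr hmemb
        simpa using this
      have he₀K : e₀ ∈ K := by
        rwa [Submodule.mkQ_apply, Submodule.Quotient.mk_eq_zero] at hz0
      have hfinal : l ⊗ₜ[Fq] (1:R) ∈ I := by
        rw [hK, Submodule.mem_comap, Submodule.restrictScalars_mem, hθe₀] at he₀K
        exact he₀K
      exact hlne (hcap l hfinal)

  exact hx₀J (by
    obtain ⟨n, a, b, hab⟩ := exists_tmul_rep x₀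
    exact key n x₀ hx₀I ⟨a, b, 0, ![], ![], by simp, by simp [hab]⟩)
end

section
/- Let X be a connected Noetherian F_q-scheme (or R a connected Noetherian F_q-algebra), Λ an F_q-algebra, and M a finitely generated Λ ⊗_{F_q} R-module with unit structure φ : F*M ≅ M. If for every maximal ideal 𝔪 ⊆ Λ the reduction M ⊗_Λ Λ/𝔪 is zero, then M = 0. -/
open TensorProduct

section Aux
variable (Fq : Type) [Field Fq] [Fintype Fq]


/-- any fixed point of `x ↦ x ^ q` in a field extension of `Fq` lies in `Fq`. -/
lemma exists_algebraMap_of_pow_card_eq {K : Type} [Field K] [Algebra Fq K] {c : K}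
    (h : c ^ Fintype.card Fq = c) : ∃ α : Fq, algebraMap Fq K α = c := by
  classical
  by_contra hc
  push_neg at hc
  set q := Fintype.card Fq with hq
  set P : Polynomial K := Polynomial.X ^ q - Polynomial.X with hP
  have hq2 : 1 < q := Fintype.one_lt_card
  have hdeg : P.natDegree = q := by
    rw [hP]
    rw [Polynomial.natDegree_sub_eq_left_of_natDegree_lt] <;>
      simp [Polynomial.natDegree_X_pow, Polynomial.natDegree_X] <;> omega
  have hP0 : P ≠ 0 := by
    intro h0
    rw [h0] at hdeg
    simp at hdeg; omega
  have hroot : ∀ z : K, z ^ q = z → z ∈ P.roots := by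
    intro z hz
    rw [Polynomial.mem_roots hP0]
    simp [hP, Polynomial.IsRoot, hz]
  set s : Finset K := Finset.image (algebraMap Fq K) Finset.univ with hs
  have hcard : s.card = q := by
    rw [hs, Finset.card_image_of_injective _ (algebraMap Fq K).injective, Finset.card_univ]
  have hsub : insert c s ⊆ P.roots.toFinset := by
    intro z hz
    rw [Multiset.mem_toFinset]
    rcases Finset.mem_insert.1 hz with rfl | hz
    · exact hroot _ h
    · obtain ⟨α, _, rfl⟩ := Finset.mem_image.1 hz
      refine hroot _ ?_
      rw [← map_pow, FiniteField.pow_card]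
  have hcs : c ∉ s := by
    intro hcs'
    obtain ⟨α, _, hα⟩ := Finset.mem_image.1 hcs'
    exact hc α hα
  have h1 : q + 1 ≤ P.roots.toFinset.card := by
    have := Finset.card_le_card hsub
    rw [Finset.card_insert_of_notMem hcs, hcard] at this
    exact this
  have h2 : P.roots.toFinset.card ≤ q := by
    calc P.roots.toFinset.card ≤ Multiset.card P.roots := Multiset.toFinset_card_le _
    _ ≤ P.natDegree := Polynomial.card_roots' P
    _ = q := hdeg
  omega

/-- Frobenius `x ↦ x ^ q` as an `Fq`-algebra endomorphism of a field `K`. -/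
noncomputable def frobAlg (K : Type) [Field K] [Algebra Fq K] : K →ₐ[Fq] K := by
  have hp : (ringChar Fq).Prime := by
    obtain ⟨n, hp, hq⟩ := FiniteField.card Fq (ringChar Fq)
    exact hp
  haveI : Fact (ringChar Fq).Prime := ⟨hp⟩
  haveI : CharP K (ringChar Fq) :=
    charP_of_injective_algebraMap (algebraMap Fq K).injective (ringChar Fq)
  exact
  { toFun := fun x => x ^ Fintype.card Fq
    map_one' := one_pow _
    map_mul' := fun x y => mul_pow x y _
    map_zero' := zero_pow Fintype.card_ne_zero
    map_add' := by
      intro x y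
      obtain ⟨n, hp', hq⟩ := FiniteField.card Fq (ringChar Fq)
      rw [hq]
      exact add_pow_char_pow x y _ _
    commutes' := fun α => by
      show (algebraMap Fq K α) ^ Fintype.card Fq = algebraMap Fq K α
      rw [← map_pow, FiniteField.pow_card] }

lemma frobAlg_apply (K : Type) [Field K] [Algebra Fq K] (x : K) :
    frobAlg Fq K x = x ^ Fintype.card Fq := rfl


set_option maxHeartbeats 1000000 in
/-- Frobenius descent: a σ-stable ideal of `Λ' ⊗ K` with no nonzero rational element
is zero. -/
lemma core_descent (Λ' K : Type) [CommRing Λ'] [Algebra Fq Λ'] [Field K] [Algebra Fq K]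
    (b : Ideal (Λ' ⊗[Fq] K))
    (hstab : ∀ x ∈ b, Algebra.TensorProduct.map (AlgHom.id Fq Λ') (frobAlg Fq K) x ∈ b)
    (hrat : ∀ μ : Λ', μ ⊗ₜ[Fq] (1 : K) ∈ b → μ = 0) :
    b = ⊥ := by
  classical
  set q := Fintype.card Fq with hqdef
  set σ := Algebra.TensorProduct.map (AlgHom.id Fq Λ') (frobAlg Fq K) with hσ
  set B := Module.Basis.ofVectorSpace Fq Λ' with hB
  set ι := Module.Basis.ofVectorSpaceIndex Fq Λ'
  -- the coordinate map ε : Λ' ⊗ K → (ι →₀ K)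
  set bil : Λ' →ₗ[Fq] K →ₗ[Fq] (ι →₀ K) :=
    LinearMap.mk₂ Fq (fun l c => (B.repr l).mapRange (fun α => α • c) (by simp))
      (fun l l' c => by
        ext i
        simp [Finsupp.mapRange_apply, map_add, add_smul])
      (fun α l c => by
        ext i
        simp [Finsupp.mapRange_apply, map_smul, mul_smul])
      (fun l c c' => by
        ext i
        simp [Finsupp.mapRange_apply, smul_add])
      (fun α l c => by
        ext i
        simp only [Finsupp.mapRange_apply, Finsupp.smul_apply]
        rw [smul_comm]) with hbil
  set ε : (Λ' ⊗[Fq] K) →ₗ[Fq] (ι →₀ K) := TensorProduct.lift bil with hε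
  have hεtmul : ∀ (l : Λ') (c : K) (i : ι), ε (l ⊗ₜ c) i = B.repr l i • c := by
    intro l c i
    simp [hε, hbil, Finsupp.mapRange_apply]
  -- the inverse η
  set η : (ι →₀ K) →ₗ[Fq] (Λ' ⊗[Fq] K) :=
    Finsupp.lsum Fq (fun i => TensorProduct.mk Fq Λ' K (B i)) with hη
  have hηε : ∀ x, η (ε x) = x := by
    intro x
    induction x using TensorProduct.induction_on with
    | zero => simp
    | tmul l c =>
      have h1 : ε (l ⊗ₜ c) = (B.repr l).mapRange (fun α => α • c) (by simp) := rfl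
      rw [h1, hη]
      rw [Finsupp.lsum_apply]
      rw [Finsupp.sum_mapRange_index (by intro i; simp)]
      have h2 : ∀ i (α : Fq), (TensorProduct.mk Fq Λ' K (B i)) (α • c)
          = (α • B i) ⊗ₜ[Fq] c := by
        intro i α
        show (B i) ⊗ₜ[Fq] (α • c) = (α • B i) ⊗ₜ[Fq] c
        rw [TensorProduct.tmul_smul, TensorProduct.smul_tmul']
      calc (B.repr l).sum (fun i α => (TensorProduct.mk Fq Λ' K (B i)) (α • c))
          = (B.repr l).sum (fun i α => (α • B i) ⊗ₜ[Fq] c) := by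
            apply Finsupp.sum_congr; intro i _; rw [h2]
        _ = ((B.repr l).sum (fun i α => α • B i)) ⊗ₜ[Fq] c := by
            rw [Finsupp.sum, Finsupp.sum, TensorProduct.sum_tmul]
        _ = l ⊗ₜ[Fq] c := by
            congr 1
            conv_rhs => rw [← B.linearCombination_repr l]
            rw [Finsupp.linearCombination_apply]
    | add x y hx hy => rw [map_add, map_add, hx, hy]
  have hεinj : Function.Injective ε := by
    intro x y hxy
    rw [← hηε x, ← hηε y, hxy]
  -- scaling property
  have hsc : ∀ (c : K) (x : Λ' ⊗[Fq] K), ε (((1 : Λ') ⊗ₜ c) * x) = c • ε x := by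
    intro c x
    induction x using TensorProduct.induction_on with
    | zero => simp
    | tmul l d =>
      rw [Algebra.TensorProduct.tmul_mul_tmul, one_mul]
      ext i
      rw [hεtmul, Finsupp.smul_apply, hεtmul, smul_eq_mul, Algebra.smul_def, Algebra.smul_def]
      ring
    | add x y hx hy => rw [mul_add, map_add, hx, map_add, hy, smul_add]
  -- frobenius property
  have hqne : q ≠ 0 := Fintype.card_ne_zero
  have hfrobadd : ∀ u v : K, (u + v) ^ q = u ^ q + v ^ q := by
    intro u v
    have := map_add (frobAlg Fq K) u v
    rwa [frobAlg_apply, frobAlg_apply, frobAlg_apply] at this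
  have hsig : ∀ (x : Λ' ⊗[Fq] K) (i : ι), ε (σ x) i = (ε x i) ^ q := by
    intro x
    induction x using TensorProduct.induction_on with
    | zero => intro i; simp [hqne]
    | tmul l c =>
      intro i
      rw [hσ, Algebra.TensorProduct.map_tmul, AlgHom.id_apply, frobAlg_apply]
      rw [hεtmul, hεtmul, Algebra.smul_def, Algebra.smul_def, mul_pow, ← map_pow,
        FiniteField.pow_card]
    | add x y hx hy =>
      intro i
      simp only [map_add, Finsupp.add_apply]
      rw [hx, hy, hfrobadd]
  -- main induction on support size
  have key : ∀ (n : ℕ) (x : Λ' ⊗[Fq] K), x ∈ b → (ε x).support.card ≤ n → x = 0 := by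
    intro n
    induction n with
    | zero =>
      intro x _ hc
      have : ε x = 0 := by
        rw [← Finsupp.support_eq_empty, ← Finset.card_eq_zero]
        omega
      rw [← hηε x, this, map_zero]
    | succ n IH =>
      intro x hx hc
      by_cases hε0 : ε x = 0
      · rw [← hηε x, hε0, map_zero]
      obtain ⟨i₀, hi₀⟩ := Finsupp.support_nonempty_iff.2 hε0
      set c₀ := ε x i₀ with hc₀def
      have hc₀ : c₀ ≠ 0 := Finsupp.mem_support_iff.1 hi₀
      set x' := ((1 : Λ') ⊗ₜ[Fq] c₀⁻¹) * x with hx'def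
      have hx'b : x' ∈ b := Ideal.mul_mem_left _ _ hx
      have hεx' : ε x' = c₀⁻¹ • ε x := hsc _ _
      have hεx'i₀ : ε x' i₀ = 1 := by
        rw [hεx', Finsupp.smul_apply, smul_eq_mul, ← hc₀def, inv_mul_cancel₀ hc₀]
      set u := σ x' - x' with hu_def
      have hub : u ∈ b := Ideal.sub_mem _ (hstab x' hx'b) hx'b
      have hui : ∀ i, ε u i = (ε x' i) ^ q - ε x' i := by
        intro i
        rw [hu_def, map_sub, Finsupp.sub_apply, hsig]
      have hsupp : (ε u).support ⊆ (ε x).support.erase i₀ := by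
        intro i hi
        have hne : ε u i ≠ 0 := Finsupp.mem_support_iff.1 hi
        rw [Finset.mem_erase]
        constructor
        · rintro rfl
          rw [hui, hεx'i₀, one_pow, sub_self] at hne
          exact hne rfl
        · rw [Finsupp.mem_support_iff]
          intro h0
          have : ε x' i = 0 := by
            rw [hεx', Finsupp.smul_apply, h0, smul_zero]
          rw [hui, this, sub_zero, zero_pow hqne] at hne
          exact hne rfl
      have hcard : (ε u).support.card ≤ n := by
        have h1 := Finset.card_le_card hsupp
        rw [Finset.card_erase_of_mem hi₀] at h1
        omega
      have hu0 : u = 0 := IH u hub hcard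
      have hfix : ∀ i, (ε x' i) ^ q = ε x' i := by
        intro i
        have := hui i
        rw [hu0, map_zero, Finsupp.zero_apply] at this
        exact sub_eq_zero.mp this.symm
      -- all coordinates of x' are rational; extract μ
      have hchoice : ∀ i, ∃ α : Fq, algebraMap Fq K α = ε x' i :=
        fun i => exists_algebraMap_of_pow_card_eq Fq (hfix i)
      choose α hα using hchoice
      set μ : Λ' := (ε x').sum (fun i _ => α i • (B i : Λ')) with hμ
      have hεμ : ε (μ ⊗ₜ[Fq] (1 : K)) = ε x' := by
        have h1 : μ ⊗ₜ[Fq] (1 : K)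
            = (ε x').sum (fun i _ => (α i • (B i : Λ')) ⊗ₜ[Fq] (1 : K)) := by
          rw [hμ, Finsupp.sum, Finsupp.sum, TensorProduct.sum_tmul]
        rw [h1]
        rw [Finsupp.sum, map_sum]
        ext j
        rw [Finsupp.finset_sum_apply]
        have h2 : ∀ i ∈ (ε x').support,
            ε ((α i • (B i : Λ')) ⊗ₜ[Fq] (1 : K)) j
              = (Finsupp.single i (algebraMap Fq K (α i)) : ι →₀ K) j := by
          intro i _
          rw [hεtmul, map_smul, Finsupp.smul_apply]
          rw [B.repr_self]
          rw [Finsupp.single_apply, Finsupp.single_apply]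
          by_cases hij : i = j <;> simp [hij, Algebra.smul_def]
        rw [Finset.sum_congr rfl h2]
        rw [← Finsupp.finset_sum_apply]
        congr 1
        have : ∀ i ∈ (ε x').support,
            (Finsupp.single i (algebraMap Fq K (α i)) : ι →₀ K)
              = Finsupp.single i (ε x' i) := by
          intro i _
          rw [hα]
        rw [Finset.sum_congr rfl this]
        exact Finsupp.sum_single (ε x')
      have hx'μ : x' = μ ⊗ₜ[Fq] (1 : K) := hεinj (by rw [hεμ])
      have hμ0 : μ = 0 := hrat μ (by rw [← hx'μ]; exact hx'b)
      have : ε x' i₀ = 0 := by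
        rw [hx'μ, hμ0, TensorProduct.zero_tmul, map_zero, Finsupp.zero_apply]
      rw [hεx'i₀] at this
      exact absurd this one_ne_zero
  refine (Submodule.eq_bot_iff _).2 (fun x hx => ?_)
  exact key (ε x).support.card x hx le_rfl

set_option maxHeartbeats 1000000 in
/-- If a σ-stable ideal of `Λ ⊗ K` is coprime to every extended maximal ideal of `Λ`,
then it is the unit ideal. -/
lemma one_mem_of_stable_coprime (Λ K : Type) [CommRing Λ] [Algebra Fq Λ]
    [Field K] [Algebra Fq K]
    (a : Ideal (Λ ⊗[Fq] K))
    (hstab : ∀ x ∈ a, Algebra.TensorProduct.map (AlgHom.id Fq Λ) (frobAlg Fq K) x ∈ a)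
    (hcop : ∀ 𝔪 : Ideal Λ, 𝔪.IsMaximal → ∃ e ∈ a,
      e - 1 ∈ Ideal.map (Algebra.TensorProduct.includeLeft : Λ →ₐ[Fq] Λ ⊗[Fq] K) 𝔪) :
    (1 : Λ ⊗[Fq] K) ∈ a := by
  classical
  -- the rational part of a
  set V : Ideal Λ :=
    { carrier := {l : Λ | l ⊗ₜ[Fq] (1 : K) ∈ a}
      add_mem' := by
        intro l l' hl hl'
        show (l + l') ⊗ₜ[Fq] (1 : K) ∈ a
        rw [TensorProduct.add_tmul]
        exact Ideal.add_mem _ hl hl'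
      zero_mem' := by
        show (0 : Λ) ⊗ₜ[Fq] (1 : K) ∈ a
        rw [TensorProduct.zero_tmul]
        exact Ideal.zero_mem _
      smul_mem' := by
        intro c l hl
        show (c * l) ⊗ₜ[Fq] (1 : K) ∈ a
        have h1 : (c * l) ⊗ₜ[Fq] (1 : K) = (c ⊗ₜ[Fq] (1 : K)) * (l ⊗ₜ[Fq] (1 : K)) := by
          rw [Algebra.TensorProduct.tmul_mul_tmul, one_mul]
        rw [h1]
        exact Ideal.mul_mem_left _ _ hl } with hV
  set Pr : (Λ ⊗[Fq] K) →ₐ[Fq] ((Λ ⧸ V) ⊗[Fq] K) :=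
    Algebra.TensorProduct.map (Ideal.Quotient.mkₐ Fq V) (AlgHom.id Fq K) with hPr
  have hPrsurj : Function.Surjective Pr := by
    intro y
    induction y using TensorProduct.induction_on with
    | zero => exact ⟨0, map_zero _⟩
    | tmul l' c =>
      obtain ⟨l, rfl⟩ := Ideal.Quotient.mk_surjective l'
      exact ⟨l ⊗ₜ[Fq] c, by rw [hPr, Algebra.TensorProduct.map_tmul, AlgHom.id_apply]; rfl⟩
    | add x y hx hy =>
      obtain ⟨x', rfl⟩ := hx
      obtain ⟨y', rfl⟩ := hy
      exact ⟨x' + y', map_add _ _ _⟩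
  have hkerPr : RingHom.ker Pr.toRingHom =
      Ideal.map (Algebra.TensorProduct.includeLeft : Λ →ₐ[Fq] Λ ⊗[Fq] K) V := by
    have h1 := Algebra.TensorProduct.rTensor_ker (R := Fq) (C := K) (Ideal.Quotient.mkₐ Fq V)
      (Ideal.Quotient.mkₐ_surjective Fq V)
    have h2 : RingHom.ker (Ideal.Quotient.mkₐ Fq V) = V := by
      ext x
      rw [RingHom.mem_ker]
      exact Ideal.Quotient.eq_zero_iff_mem
    rw [h2] at h1
    exact h1
  have hVEa : Ideal.map (Algebra.TensorProduct.includeLeft : Λ →ₐ[Fq] Λ ⊗[Fq] K) V ≤ a := by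
    rw [Ideal.map_le_iff_le_comap]
    intro l hl
    exact hl
  -- apply the core lemma to the image of a
  set abar : Ideal ((Λ ⧸ V) ⊗[Fq] K) := Ideal.map Pr.toRingHom a with habar
  have hstab_abar : ∀ y ∈ abar,
      Algebra.TensorProduct.map (AlgHom.id Fq (Λ ⧸ V)) (frobAlg Fq K) y ∈ abar := by
    intro y hy
    set σT := Algebra.TensorProduct.map (AlgHom.id Fq (Λ ⧸ V)) (frobAlg Fq K) with hσT
    set σE := Algebra.TensorProduct.map (AlgHom.id Fq Λ) (frobAlg Fq K) with hσE
    have hcomm : σT.toRingHom.comp Pr.toRingHom = Pr.toRingHom.comp σE.toRingHom := by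
      refine RingHom.ext fun x => ?_
      induction x using TensorProduct.induction_on with
      | zero => simp
      | tmul l c =>
        show σT (Pr (l ⊗ₜ[Fq] c)) = Pr (σE (l ⊗ₜ[Fq] c))
        rw [hPr, hσT, hσE, Algebra.TensorProduct.map_tmul, Algebra.TensorProduct.map_tmul,
          Algebra.TensorProduct.map_tmul, Algebra.TensorProduct.map_tmul]
        rfl
      | add x y hx hy =>
        show σT (Pr (x + y)) = Pr (σE (x + y))
        rw [map_add, map_add, map_add, map_add]
        exact congrArg₂ (· + ·) hx hy
    have h1 : Ideal.map σT.toRingHom abar ≤ abar := by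
      rw [habar, Ideal.map_map, hcomm, ← Ideal.map_map]
      refine Ideal.map_mono ?_
      rw [Ideal.map_le_iff_le_comap]
      exact fun x hx => hstab x hx
    exact h1 (Ideal.mem_map_of_mem _ hy)
  have hrat_abar : ∀ μ' : Λ ⧸ V, μ' ⊗ₜ[Fq] (1 : K) ∈ abar → μ' = 0 := by
    intro μ' hμ'
    obtain ⟨μ, rfl⟩ := Ideal.Quotient.mk_surjective μ'
    rw [habar] at hμ'
    obtain ⟨x, hxa, hxeq⟩ := (Ideal.mem_map_iff_of_surjective _ hPrsurj).1 hμ'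
    have hPrμ : Pr (μ ⊗ₜ[Fq] (1 : K)) = (Ideal.Quotient.mk V μ) ⊗ₜ[Fq] (1 : K) := by
      rw [hPr, Algebra.TensorProduct.map_tmul, AlgHom.id_apply]; rfl
    have hker : x - μ ⊗ₜ[Fq] (1 : K) ∈ RingHom.ker Pr.toRingHom := by
      rw [RingHom.mem_ker, map_sub]
      show Pr x - Pr (μ ⊗ₜ[Fq] (1 : K)) = 0
      rw [hxeq, hPrμ, sub_self]
    rw [hkerPr] at hker
    have hμa : μ ⊗ₜ[Fq] (1 : K) ∈ a := by
      have h1 := hVEa hker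
      have h2 : μ ⊗ₜ[Fq] (1 : K) = x - (x - μ ⊗ₜ[Fq] (1 : K)) := by ring
      rw [h2]
      exact Ideal.sub_mem _ hxa h1
    rw [Ideal.Quotient.eq_zero_iff_mem]
    exact hμa
  have habar_bot : abar = ⊥ := core_descent Fq (Λ ⧸ V) K abar hstab_abar hrat_abar
  have haker : a ≤ RingHom.ker Pr.toRingHom := by
    intro x hx
    rw [RingHom.mem_ker]
    have h1 : Pr x ∈ abar := Ideal.mem_map_of_mem _ hx
    rwa [habar_bot, Ideal.mem_bot] at h1
  -- V is contained in no maximal ideal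
  have hVnotin : ∀ 𝔪 : Ideal Λ, 𝔪.IsMaximal → ¬ (V ≤ 𝔪) := by
    intro 𝔪 h𝔪 hV𝔪
    obtain ⟨e, hea, he1⟩ := hcop 𝔪 h𝔪
    set 𝔪E : Ideal (Λ ⊗[Fq] K) :=
      Ideal.map (Algebra.TensorProduct.includeLeft : Λ →ₐ[Fq] Λ ⊗[Fq] K) 𝔪 with h𝔪E
    have hgs : e ∈ 𝔪E := by
      have h2 := haker hea
      rw [hkerPr] at h2
      exact Ideal.map_mono hV𝔪 h2
    have h1 : (1 : Λ ⊗[Fq] K) ∈ 𝔪E := by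
      have h2 := Ideal.sub_mem _ hgs he1
      simpa using h2
    -- contradiction: map to (Λ/𝔪) ⊗ K which is nontrivial
    set Pr2 : (Λ ⊗[Fq] K) →ₐ[Fq] ((Λ ⧸ 𝔪) ⊗[Fq] K) :=
      Algebra.TensorProduct.map (Ideal.Quotient.mkₐ Fq 𝔪) (AlgHom.id Fq K) with hPr2
    have h2 : Ideal.map Pr2.toRingHom 𝔪E ≤ ⊥ := by
      rw [h𝔪E, Ideal.map_le_iff_le_comap, Ideal.map_le_iff_le_comap]
      intro l hl
      simp only [Ideal.mem_comap]
      rw [Ideal.mem_bot]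
      show Pr2 (l ⊗ₜ[Fq] (1 : K)) = 0
      rw [hPr2, Algebra.TensorProduct.map_tmul, AlgHom.id_apply, Ideal.Quotient.mkₐ_eq_mk,
        (Ideal.Quotient.eq_zero_iff_mem).2 hl, TensorProduct.zero_tmul]
    haveI : Nontrivial (Λ ⧸ 𝔪) := Ideal.Quotient.nontrivial_iff.mpr h𝔪.ne_top
    haveI : Nontrivial ((Λ ⧸ 𝔪) ⊗[Fq] K) := inferInstance
    have h4 : (1 : (Λ ⧸ 𝔪) ⊗[Fq] K) ∈ Ideal.map Pr2.toRingHom 𝔪E := by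
      have h5 := Ideal.mem_map_of_mem Pr2.toRingHom h1
      rwa [map_one] at h5
    have h6 := h2 h4
    rw [Ideal.mem_bot] at h6
    exact one_ne_zero h6
  have hVtop : V = ⊤ := by
    by_contra hVne
    obtain ⟨𝔪, h𝔪, hV𝔪⟩ := Ideal.exists_le_maximal V hVne
    exact hVnotin 𝔪 h𝔪 hV𝔪
  have h1V : (1 : Λ) ∈ V := hVtop ▸ Submodule.mem_top
  have h2 : (1 : Λ) ⊗ₜ[Fq] (1 : K) ∈ a := h1V
  rwa [← Algebra.TensorProduct.one_def] at h2

set_option maxHeartbeats 2000000 in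
/-- An `F`-stable ideal of `Λ ⊗ R` which is coprime to every extended maximal ideal of `Λ`
cannot be contained in a maximal ideal. -/
lemma no_proper_stable_coprime_ideal (Λ R : Type) [CommRing Λ] [Algebra Fq Λ]
    [CommRing R] [Algebra Fq R]
    (F : (Λ ⊗[Fq] R) →+* (Λ ⊗[Fq] R))
    (hF : ∀ (l : Λ) (r : R), F (l ⊗ₜ[Fq] r) = l ⊗ₜ[Fq] (r ^ Fintype.card Fq))
    (A : Ideal (Λ ⊗[Fq] R)) (hFA : ∀ s ∈ A, F s ∈ A)
    (𝔫 : Ideal (Λ ⊗[Fq] R)) (h𝔫max : 𝔫.IsMaximal) (hA𝔫 : A ≤ 𝔫)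
    (hnak : ∀ 𝔪 : Ideal Λ, 𝔪.IsMaximal → ∃ s ∈ A,
      s - 1 ∈ Ideal.map (Algebra.TensorProduct.includeLeftRingHom : Λ →+* Λ ⊗[Fq] R) 𝔪) :
    False := by
  classical
  haveI h𝔫pr : 𝔫.IsPrime := h𝔫max.isPrime
  set ρ : R →ₐ[Fq] Λ ⊗[Fq] R := Algebra.TensorProduct.includeRight with hρ
  set p : Ideal R := Ideal.comap ρ.toRingHom 𝔫 with hp
  haveI hppr : p.IsPrime := Ideal.IsPrime.comap _
  set ψ : R →ₐ[Fq] FractionRing (R ⧸ p) :=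
    (IsScalarTower.toAlgHom Fq (R ⧸ p) (FractionRing (R ⧸ p))).comp (Ideal.Quotient.mkₐ Fq p)
    with hψ
  set g : (Λ ⊗[Fq] R) →ₐ[Fq] (Λ ⊗[Fq] FractionRing (R ⧸ p)) :=
    Algebra.TensorProduct.map (AlgHom.id Fq Λ) ψ with hg
  set σE : (Λ ⊗[Fq] FractionRing (R ⧸ p)) →ₐ[Fq] (Λ ⊗[Fq] FractionRing (R ⧸ p)) :=
    Algebra.TensorProduct.map (AlgHom.id Fq Λ) (frobAlg Fq (FractionRing (R ⧸ p))) with hσE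
  have hσg : ∀ x : Λ ⊗[Fq] R, σE (g x) = g (F x) := by
    intro x
    induction x using TensorProduct.induction_on with
    | zero => rw [map_zero, map_zero, map_zero, map_zero]
    | tmul l r =>
      have e1 : g (l ⊗ₜ[Fq] r) = l ⊗ₜ[Fq] (ψ r) := by
        rw [hg, Algebra.TensorProduct.map_tmul, AlgHom.id_apply]
      have e2 : g (l ⊗ₜ[Fq] (r ^ Fintype.card Fq)) = l ⊗ₜ[Fq] (ψ r ^ Fintype.card Fq) := by
        rw [hg, Algebra.TensorProduct.map_tmul, AlgHom.id_apply, map_pow]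
      have e3 : σE (l ⊗ₜ[Fq] (ψ r)) = l ⊗ₜ[Fq] (ψ r ^ Fintype.card Fq) := by
        rw [hσE, Algebra.TensorProduct.map_tmul, AlgHom.id_apply, frobAlg_apply]
      rw [hF, e1, e3, e2]
    | add x y hx hy => rw [map_add, map_add, hx, hy, map_add, map_add]
  set a : Ideal (Λ ⊗[Fq] FractionRing (R ⧸ p)) := Ideal.map g.toRingHom A with ha
  have hstab_a : ∀ x ∈ a, σE x ∈ a := by
    intro x hx
    have h1 : Ideal.map σE.toRingHom a ≤ a := by
      rw [ha, Ideal.map_map]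
      have hcomp : σE.toRingHom.comp g.toRingHom = g.toRingHom.comp F := RingHom.ext hσg
      rw [hcomp, ← Ideal.map_map]
      refine Ideal.map_mono ?_
      rw [Ideal.map_le_iff_le_comap]
      exact fun s hs => hFA s hs
    exact h1 (Ideal.mem_map_of_mem _ hx)
  have hgincl : ∀ l : Λ,
      g (Algebra.TensorProduct.includeLeftRingHom (R := Fq) (A := Λ) (B := R) l)
      = l ⊗ₜ[Fq] (1 : FractionRing (R ⧸ p)) := by
    intro l
    rw [hg]
    show Algebra.TensorProduct.map (AlgHom.id Fq Λ) ψ (l ⊗ₜ[Fq] (1 : R))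
      = l ⊗ₜ[Fq] (1 : FractionRing (R ⧸ p))
    rw [Algebra.TensorProduct.map_tmul, AlgHom.id_apply, map_one]
  have hcop : ∀ 𝔪 : Ideal Λ, 𝔪.IsMaximal → ∃ e ∈ a,
      e - 1 ∈ Ideal.map
        (Algebra.TensorProduct.includeLeft : Λ →ₐ[Fq] Λ ⊗[Fq] FractionRing (R ⧸ p)) 𝔪 := by
    intro 𝔪 h𝔪
    obtain ⟨s, hsA, hs1⟩ := hnak 𝔪 h𝔪
    refine ⟨g s, Ideal.mem_map_of_mem _ hsA, ?_⟩
    have h1 : g s - 1 = g (s - 1) := by rw [map_sub, map_one]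
    rw [h1]
    have h2 : Ideal.map g.toRingHom
        (Ideal.map (Algebra.TensorProduct.includeLeftRingHom : Λ →+* Λ ⊗[Fq] R) 𝔪)
        ≤ Ideal.map
          (Algebra.TensorProduct.includeLeft : Λ →ₐ[Fq] Λ ⊗[Fq] FractionRing (R ⧸ p)) 𝔪 := by
      rw [Ideal.map_map]
      have h3 : ∀ z ∈ 𝔪, (g.toRingHom.comp
          (Algebra.TensorProduct.includeLeftRingHom : Λ →+* Λ ⊗[Fq] R)) z ∈ Ideal.map
          (Algebra.TensorProduct.includeLeft : Λ →ₐ[Fq] Λ ⊗[Fq] FractionRing (R ⧸ p)) 𝔪 := by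
        intro z hz
        show g (Algebra.TensorProduct.includeLeftRingHom z) ∈ _
        rw [hgincl z]
        exact Ideal.mem_map_of_mem _ hz
      rw [Ideal.map_le_iff_le_comap]
      intro z hz
      exact h3 z hz
    exact h2 (Ideal.mem_map_of_mem _ hs1)
  have h1a : (1 : Λ ⊗[Fq] FractionRing (R ⧸ p)) ∈ a :=
    one_mem_of_stable_coprime Fq Λ (FractionRing (R ⧸ p)) a hstab_a hcop
  -- the evaluation map χ to the residue field D = (Λ ⊗ R)/𝔫
  letI : Field ((Λ ⊗[Fq] R) ⧸ 𝔫) := Ideal.Quotient.field 𝔫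
  set mk𝔫 : (Λ ⊗[Fq] R) →ₐ[Fq] ((Λ ⊗[Fq] R) ⧸ 𝔫) := Ideal.Quotient.mkₐ Fq 𝔫 with hmk𝔫
  set d' : (R ⧸ p) →ₐ[Fq] ((Λ ⊗[Fq] R) ⧸ 𝔫) := Ideal.Quotient.liftₐ p (mk𝔫.comp ρ) (by
    intro r hr
    show mk𝔫 (ρ r) = 0
    rw [hmk𝔫, Ideal.Quotient.mkₐ_eq_mk, Ideal.Quotient.eq_zero_iff_mem]
    exact hr) with hd'
  have hd'inj : Function.Injective d' := by
    rw [injective_iff_map_eq_zero]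
    intro x hx
    obtain ⟨r, rfl⟩ := Ideal.Quotient.mk_surjective x
    have h1 : mk𝔫 (ρ r) = 0 := hx
    rw [hmk𝔫, Ideal.Quotient.mkₐ_eq_mk, Ideal.Quotient.eq_zero_iff_mem] at h1
    rw [Ideal.Quotient.eq_zero_iff_mem]
    exact h1
  set χK : FractionRing (R ⧸ p) →ₐ[Fq] ((Λ ⊗[Fq] R) ⧸ 𝔫) :=
    IsFractionRing.liftAlgHom (K := FractionRing (R ⧸ p)) hd'inj with hχK
  set χΛ : Λ →ₐ[Fq] ((Λ ⊗[Fq] R) ⧸ 𝔫) :=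
    mk𝔫.comp (Algebra.TensorProduct.includeLeft) with hχΛ
  set χ : (Λ ⊗[Fq] FractionRing (R ⧸ p)) →ₐ[Fq] ((Λ ⊗[Fq] R) ⧸ 𝔫) :=
    Algebra.TensorProduct.productMap χΛ χK with hχ
  have hχg : ∀ x : Λ ⊗[Fq] R, χ (g x) = Ideal.Quotient.mk 𝔫 x := by
    intro x
    induction x using TensorProduct.induction_on with
    | zero => rw [map_zero, map_zero, map_zero]
    | tmul l r =>
      rw [hg, Algebra.TensorProduct.map_tmul, AlgHom.id_apply, hχ,
        Algebra.TensorProduct.productMap_apply_tmul]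
      have h1 : χK (ψ r) = mk𝔫 (ρ r) := by
        rw [hψ]
        show χK (algebraMap (R ⧸ p) (FractionRing (R ⧸ p)) (Ideal.Quotient.mk p r)) = mk𝔫 (ρ r)
        rw [hχK, IsFractionRing.liftAlgHom_apply, IsFractionRing.lift_algebraMap]
        rfl
      rw [h1, hχΛ]
      show mk𝔫 (l ⊗ₜ[Fq] (1 : R)) * mk𝔫 (1 ⊗ₜ[Fq] r) = Ideal.Quotient.mk 𝔫 (l ⊗ₜ[Fq] r)
      rw [← map_mul, Algebra.TensorProduct.tmul_mul_tmul, one_mul, mul_one]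
      rfl
    | add x y hx hy => rw [map_add, map_add, hx, hy, map_add]
  -- final contradiction
  have hfinal : (1 : (Λ ⊗[Fq] R) ⧸ 𝔫) ∈ Ideal.map (Ideal.Quotient.mk 𝔫) A := by
    have h1 : (1 : (Λ ⊗[Fq] R) ⧸ 𝔫) ∈ Ideal.map χ.toRingHom a := by
      have h2 := Ideal.mem_map_of_mem χ.toRingHom h1a
      rwa [map_one] at h2
    rw [ha, Ideal.map_map] at h1
    have h2 : χ.toRingHom.comp g.toRingHom
        = (Ideal.Quotient.mk 𝔫 : (Λ ⊗[Fq] R) →+* (Λ ⊗[Fq] R) ⧸ 𝔫) :=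
      RingHom.ext hχg
    rwa [h2] at h1
  have h5 : Ideal.map (Ideal.Quotient.mk 𝔫) A ≤ ⊥ := by
    have h6 := Ideal.map_mono (f := (Ideal.Quotient.mk 𝔫 : (Λ ⊗[Fq] R) →+* (Λ ⊗[Fq] R) ⧸ 𝔫)) hA𝔫
    rwa [Ideal.map_quotient_self] at h6
  have h6 := h5 hfinal
  rw [Ideal.mem_bot] at h6
  exact one_ne_zero h6

end Aux

/-- `Restrict f M` is `M` viewed as an `A`-module via restriction of scalars along the
ring homomorphism `f : A →+* B`. -/
def Restrict {A B : Type} [CommRing A] [CommRing B] (_f : A →+* B) (M : Type) : Type := M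

instance {A B : Type} [CommRing A] [CommRing B] (f : A →+* B) (M : Type) [AddCommGroup M] :
    AddCommGroup (Restrict f M) := inferInstanceAs (AddCommGroup M)

instance {A B : Type} [CommRing A] [CommRing B] (f : A →+* B) (M : Type) [AddCommGroup M]
    [Module B M] : Module A (Restrict f M) := Module.compHom M f

/-- The identity map `Restrict f M → M`. -/
def Restrict.out {A B : Type} [CommRing A] [CommRing B] {f : A →+* B} {M : Type}
    (x : Restrict f M) : M := x

/-- `g : N →ₗ[A] Restrict f M` (an `f`-semilinear map `N → M`) exhibits the `B`-module `M`
as the base change of the `A`-module `N` along `f : A →+* B`: every `f`-semilinear map from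
`N` to a `B`-module `Q` factors uniquely through `g` via a `B`-linear map `M → Q`.  This is
the universal property of `B ⊗_{A,f} N ≅ M`. -/
def IsBaseChangeAlong {A B : Type} [CommRing A] [CommRing B] (f : A →+* B)
    {N M : Type} [AddCommGroup N] [Module A N] [AddCommGroup M] [Module B M]
    (g : N →ₗ[A] Restrict f M) : Prop :=
  ∀ (Q : Type) [AddCommGroup Q] [Module B Q] (h : N →ₗ[A] Restrict f Q),
    ∃! H : M →ₗ[B] Q, ∀ n : N, H ((g n).out) = (h n).out


set_option maxHeartbeats 1000000 in
/-- **Vanishing criterion for unit modules.** Let `R` be a connected Noetherian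
`F_q`-algebra, `Λ` an `F_q`-algebra, `S = Λ ⊗[F_q] R`, `F : S → S` the Frobenius, and `M`
a finitely generated `S`-module with a unit structure `φ : F*M ≅ M`. If for every maximal
ideal `𝔪 ⊆ Λ` the reduction `M ⊗_Λ Λ/𝔪` (i.e. `M/𝔪M`) is zero, then `M = 0`. -/
theorem unit_module_eq_zero_of_reductions_zero
    (Fq : Type) [Field Fq] [Fintype Fq]
    (Λ : Type) [CommRing Λ] [Algebra Fq Λ]
    (R : Type) [CommRing R] [Algebra Fq R] [IsNoetherianRing R]
    [ConnectedSpace (PrimeSpectrum R)]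
    (F : (Λ ⊗[Fq] R) →+* (Λ ⊗[Fq] R))
    (hF : ∀ (l : Λ) (r : R), F (l ⊗ₜ[Fq] r) = l ⊗ₜ[Fq] (r ^ Fintype.card Fq))
    (M : Type) [AddCommGroup M] [Module (Λ ⊗[Fq] R) M] [Module.Finite (Λ ⊗[Fq] R) M]
    (φ : M →ₗ[Λ ⊗[Fq] R] Restrict F M) (hφ : IsBaseChangeAlong F φ)
    (hvan : ∀ 𝔪 : Ideal Λ, 𝔪.IsMaximal →
      (Ideal.map (Algebra.TensorProduct.includeLeftRingHom : Λ →+* Λ ⊗[Fq] R) 𝔪) •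
        (⊤ : Submodule (Λ ⊗[Fq] R) M) = ⊤) :
    Subsingleton M := by
  classical
  by_contra hns
  rw [not_subsingleton_iff_nontrivial] at hns
  obtain ⟨m₁, m₂, hm⟩ := hns
  -- the annihilator of M
  set A : Ideal (Λ ⊗[Fq] R) := (⊤ : Submodule (Λ ⊗[Fq] R) M).annihilator with hA
  have hmemA : ∀ s : Λ ⊗[Fq] R, s ∈ A ↔ ∀ m : M, s • m = 0 := by
    intro s
    rw [hA, Submodule.mem_annihilator]
    exact ⟨fun h m => h m trivial, fun h m _ => h m⟩
  have hAne : A ≠ ⊤ := by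
    intro h
    have h1 : (1 : Λ ⊗[Fq] R) ∈ A := h ▸ Submodule.mem_top
    have h2 := (hmemA 1).1 h1
    exact hm (by rw [← one_smul (Λ ⊗[Fq] R) m₁, h2, ← one_smul (Λ ⊗[Fq] R) m₂, h2])
  obtain ⟨𝔫, h𝔫max, hA𝔫⟩ := Ideal.exists_le_maximal A hAne
  -- M is spanned by the image of φ
  have hspan : Submodule.span (Λ ⊗[Fq] R) (Set.range fun n : M => (φ n).out) = ⊤ := by
    set T0 := Submodule.span (Λ ⊗[Fq] R) (Set.range fun n : M => (φ n).out) with hT0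
    obtain ⟨H, hH, huniq⟩ := hφ (M ⧸ T0) 0
    have h1 : T0.mkQ = H := by
      apply huniq
      intro n
      have h2 : (φ n).out ∈ T0 := Submodule.subset_span ⟨n, rfl⟩
      show Submodule.Quotient.mk ((φ n).out) = (0 : M ⧸ T0)
      rw [Submodule.Quotient.mk_eq_zero]
      exact h2
    have h2 : (0 : M →ₗ[Λ ⊗[Fq] R] M ⧸ T0) = H := by
      apply huniq
      intro n
      rfl
    have h3 : T0.mkQ = (0 : M →ₗ[Λ ⊗[Fq] R] M ⧸ T0) := h1.trans h2.symm
    rw [eq_top_iff]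
    intro m _
    have h4 : T0.mkQ m = 0 := by rw [h3]; rfl
    rwa [Submodule.mkQ_apply, Submodule.Quotient.mk_eq_zero] at h4
  -- the annihilator is F-stable
  have hFA : ∀ s ∈ A, F s ∈ A := by
    intro s hs
    rw [hmemA] at hs ⊢
    intro m
    have hmem : m ∈ Submodule.span (Λ ⊗[Fq] R) (Set.range fun n : M => (φ n).out) := by
      rw [hspan]; trivial
    induction hmem using Submodule.span_induction with
    | mem x hx =>
      obtain ⟨n, rfl⟩ := hx
      have hsemi : (φ (s • n)).out = F s • (φ n).out := by
        rw [map_smul]; rfl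
      rw [← hsemi, hs n, map_zero]; rfl
    | zero => exact smul_zero _
    | add x y _ _ hx hy => rw [smul_add, hx, hy, add_zero]
    | smul t x _ hx => rw [smul_comm, hx, smul_zero]
  -- Nakayama elements
  have hnak : ∀ 𝔪 : Ideal Λ, 𝔪.IsMaximal → ∃ s ∈ A,
      s - 1 ∈ Ideal.map (Algebra.TensorProduct.includeLeftRingHom : Λ →+* Λ ⊗[Fq] R) 𝔪 := by
    intro 𝔪 h𝔪
    obtain ⟨s, hs1, hs0⟩ := Submodule.exists_sub_one_mem_and_smul_eq_zero_of_fg_of_le_smul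
      (Ideal.map (Algebra.TensorProduct.includeLeftRingHom : Λ →+* Λ ⊗[Fq] R) 𝔪)
      (⊤ : Submodule (Λ ⊗[Fq] R) M) Module.Finite.fg_top (le_of_eq (hvan 𝔪 h𝔪).symm)
    exact ⟨s, (hmemA s).2 (fun m => hs0 m trivial), hs1⟩
  exact no_proper_stable_coprime_ideal Fq Λ R F hF A hFA 𝔫 h𝔫max hA𝔫 hnak
end
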